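/- arXiv:2404.18688 — 5 statements merged into one kernel-verified Lean document; each statement's English description precedes it below -/
import Mathlib

section
/- Let K : ℝ → [0,∞) be a compactly supported, symmetric kernel with ∫ K(u) du = 1, ∫ u K(u) du = 0, and 0 < ∫ u² K(u) du < ∞. Let p be a continuously differentiable probability density and f : ℝ → ℝ twice continuously differentiable. Fix y ∈ ℝ and define, for h > 0, B(h) = (1/h) ∫ K((y − t)/h) (f(t) − f(y)) p(t) dt (which equals E[m̂₁(y)] for m̂₁(y) = (1/(nh)) Σ_i K((y − Y_i)/h)(f(Y_i) − f(y)) with Y_i i.i.d. of density p). Then lim_{h → 0⁺} B(h)/h² = (1/2) (2 f′(y) p′(y) + f″(y) p(y)) ∫ u² K(u) du. -/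
open MeasureTheory Filter
open scoped ENNReal NNReal Topology

lemma aux_mul_cont {A Bf : ℝ → ℝ} {a' x : ℝ}
    (hA : HasDerivAt A a' x) (hA0 : A x = 0) (hB : ContinuousAt Bf x) :
    HasDerivAt (fun t => A t * Bf t) (a' * Bf x) x := by
  rw [hasDerivAt_iff_tendsto_slope] at hA ⊢
  have hcong : (fun t => slope A x t * Bf t) =ᶠ[𝓝[≠] x] slope (fun t => A t * Bf t) x := by
    filter_upwards [self_mem_nhdsWithin] with t ht
    simp only [slope_def_field, hA0]
    field_simp
    ring
  exact (hA.mul (hB.tendsto.mono_left nhdsWithin_le_nhds)).congr' hcong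

/-- Second-order expansion of the bias term of the Nadaraya–Watson
estimator: for a compactly supported symmetric kernel `K` with `∫K = 1`, `∫uK = 0`,
`0 < ∫u²K < ∞`, a `C¹` density `p` and a `C²` regression function `f`,
`B(h) = (1/h)∫K((y−t)/h)(f(t) − f(y))p(t)dt` satisfies
`B(h)/h² → (1/2)(2f′(y)p′(y) + f″(y)p(y))∫u²K(u)du` as `h → 0⁺`. -/
theorem stmt9
    (K : ℝ → ℝ) (hKmeas : Measurable K) (hKnn : ∀ u, 0 ≤ K u)
    (hKsupp : HasCompactSupport K) (hKsymm : ∀ u, K (-u) = K u)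
    (hK1 : ∫ u, K u = 1) (hKu : ∫ u, u * K u = 0)
    (hKu2pos : 0 < ∫ u, u ^ 2 * K u)
    (p : ℝ → ℝ) (hp : ContDiff ℝ 1 p) (hpnn : ∀ t, 0 ≤ p t) (hp1 : ∫ t, p t = 1)
    (f : ℝ → ℝ) (hf : ContDiff ℝ 2 f)
    (y : ℝ) (B : ℝ → ℝ)
    (hB : ∀ h : ℝ, B h = (1 / h) * ∫ t, K ((y - t) / h) * (f t - f y) * p t) :
    Tendsto (fun h => B h / h ^ 2) (𝓝[>] 0)
      (𝓝 ((1 / 2) * (2 * deriv f y * deriv p y + deriv (deriv f) y * p y)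
        * ∫ u, u ^ 2 * K u)) := by
  classical
  set q : ℝ := ∫ u, u ^ 2 * K u with hqdef
  set a : ℝ := deriv f y * p y with hadef
  set b : ℝ := (1/2) * (2 * deriv f y * deriv p y + deriv (deriv f) y * p y) with hbdef
  set g : ℝ → ℝ := fun t => (f t - f y) * p t with hgdef
  set r : ℝ → ℝ := fun s => g (y + s) - a * s - b * s ^ 2 with hrdef
  -- basic differentiability facts
  have hfd : Differentiable ℝ f := hf.differentiable (by norm_num)
  have hf1 : ContDiff ℝ 1 (deriv f) :=
    ((contDiff_succ_iff_deriv (n := 1)).mp (by exact_mod_cast hf)).2.2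
  have hf'd : Differentiable ℝ (deriv f) := hf1.differentiable (by norm_num)
  have hpd : Differentiable ℝ p := hp.differentiable (by norm_num)
  have hp'c : Continuous (deriv p) := (contDiff_one_iff_deriv.mp hp).2
  -- g has derivative G
  set G : ℝ → ℝ := fun t => deriv f t * p t + (f t - f y) * deriv p t with hGdef
  have hg : ∀ t, HasDerivAt g (G t) t := by
    intro t
    exact (((hfd t).hasDerivAt.sub_const (f y)).mul (hpd t).hasDerivAt)
  have hG : HasDerivAt G (2 * b) y := by
    have part1 : HasDerivAt (fun t => deriv f t * p t)
        (deriv (deriv f) y * p y + deriv f y * deriv p y) y :=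
      ((hf'd y).hasDerivAt).mul (hpd y).hasDerivAt
    have part2 : HasDerivAt (fun t => (f t - f y) * deriv p t)
        (deriv f y * deriv p y) y := by
      have := aux_mul_cont (A := fun t => f t - f y) (Bf := deriv p)
        ((hfd y).hasDerivAt.sub_const (f y)) (by simp) (hp'c.continuousAt)
      simpa using this
    have := part1.add part2
    exact this.congr_deriv (by rw [hbdef]; ring)
  -- r has derivative R, R 0 = 0, r 0 = 0
  set R : ℝ → ℝ := fun s => G (y + s) - (a + 2 * b * s) with hRdef
  have hr : ∀ s, HasDerivAt r (R s) s := by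
    intro s
    have hin : HasDerivAt (fun s : ℝ => y + s) 1 s := (hasDerivAt_id s).const_add y
    have h1 : HasDerivAt (fun s => g (y + s)) (G (y + s) * 1) s :=
      HasDerivAt.comp s (hg (y + s)) hin
    have h2 : HasDerivAt (fun s : ℝ => a * s) a s := by
      simpa using (hasDerivAt_id s).const_mul a
    have h3 : HasDerivAt (fun s : ℝ => b * s ^ 2) (b * (2 * s)) s := by
      simpa using (hasDerivAt_pow 2 s).const_mul b
    have := (h1.sub h2).sub h3
    exact this.congr_deriv (by simp only [hRdef]; ring)
  have hr0 : r 0 = 0 := by simp [hrdef, hgdef]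
  have hR0 : R 0 = 0 := by simp [hRdef, hGdef, hadef]
  have hR' : HasDerivAt R 0 0 := by
    have hin : HasDerivAt (fun s : ℝ => y + s) 1 0 := (hasDerivAt_id 0).const_add y
    have hGy0 : HasDerivAt G (2 * b) (y + 0) := by simpa using hG
    have h1 : HasDerivAt (fun s => G (y + s)) (2 * b * 1) 0 := HasDerivAt.comp 0 hGy0 hin
    have h2 : HasDerivAt (fun s : ℝ => a + 2 * b * s) (0 + 2 * b * 1) 0 :=
      (hasDerivAt_const (0:ℝ) a).add (((hasDerivAt_id (0:ℝ)).const_mul (2*b)))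
    have := h1.sub h2
    exact this.congr_deriv (by ring)
  -- little-o: |R s| ≤ ε |s| near 0
  have hRo : (fun s => R s) =o[𝓝 (0:ℝ)] fun s => s := by
    have := hasDerivAt_iff_isLittleO.mp hR'
    simpa [hR0] using this
  -- MVT bound: |r s| ≤ ε s² near 0
  have hrbound : ∀ ε : ℝ, 0 < ε → ∃ δ : ℝ, 0 < δ ∧ ∀ s : ℝ, |s| ≤ δ → |r s| ≤ ε * s ^ 2 := by
    intro ε hε
    have hev := hRo.def hε
    rw [Metric.eventually_nhds_iff] at hev
    obtain ⟨δ, hδ0, hδ⟩ := hev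
    refine ⟨δ / 2, by positivity, fun s hs => ?_⟩
    have hbound : ∀ t ∈ Set.Icc (-|s|) (|s|), ‖R t‖ ≤ ε * |s| := by
      intro t ht
      have h1 : |t| ≤ |s| := abs_le.mpr ⟨ht.1, ht.2⟩
      have h2 : dist t 0 < δ := by
        rw [Real.dist_eq, sub_zero]
        calc |t| ≤ |s| := h1
          _ ≤ δ / 2 := hs
          _ < δ := by linarith
      have := hδ h2
      rw [Real.norm_eq_abs, Real.norm_eq_abs] at this
      calc ‖R t‖ = |R t| := rfl
        _ ≤ ε * |t| := this
        _ ≤ ε * |s| := by nlinarith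
    have hmvt := (convex_Icc (-|s|) (|s|)).norm_image_sub_le_of_norm_hasDerivWithin_le
      (f := r) (f' := R) (fun t _ => (hr t).hasDerivWithinAt) hbound
      (Set.mem_Icc.mpr ⟨neg_nonpos.mpr (abs_nonneg s), abs_nonneg s⟩)
      (Set.mem_Icc.mpr ⟨neg_abs_le s, le_abs_self s⟩)
    rw [hr0, sub_zero, sub_zero, Real.norm_eq_abs, Real.norm_eq_abs] at hmvt
    have habs2 : |s| * |s| = s ^ 2 := by rw [← pow_two, sq_abs]
    calc |r s| ≤ ε * |s| * |s| := hmvt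
      _ = ε * s ^ 2 := by rw [mul_assoc, habs2]
  -- support radius
  obtain ⟨M, hM0, hKM⟩ : ∃ M : ℝ, 0 < M ∧ ∀ u, K u ≠ 0 → |u| ≤ M := by
    obtain ⟨M, hM⟩ := hKsupp.isCompact.isBounded.subset_closedBall 0
    refine ⟨max M 1, by positivity, fun u hu => ?_⟩
    have := hM (subset_tsupport K hu)
    rw [Metric.mem_closedBall, Real.dist_eq, sub_zero] at this
    exact this.trans (le_max_left _ _)
  -- integrabilities
  have hKint : Integrable K := by
    by_contra hcon
    rw [integral_undef hcon] at hK1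
    norm_num at hK1
  have hI1 : Integrable (fun u => u * K u) := by
    refine (hKint.const_mul M).mono' ((measurable_id.mul hKmeas).aestronglyMeasurable) ?_
    filter_upwards with u
    by_cases hKu0 : K u = 0
    · simp [hKu0]
    · rw [Real.norm_eq_abs, abs_mul, abs_of_nonneg (hKnn u)]
      exact mul_le_mul_of_nonneg_right (hKM u hKu0) (hKnn u)
  have hI2 : Integrable (fun u => u ^ 2 * K u) := by
    refine (hKint.const_mul (M^2)).mono'
      (((measurable_id.pow_const 2).mul hKmeas).aestronglyMeasurable) ?_
    filter_upwards with u
    by_cases hKu0 : K u = 0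
    · simp [hKu0]
    · rw [Real.norm_eq_abs, abs_mul, abs_of_nonneg (hKnn u)]
      refine mul_le_mul_of_nonneg_right ?_ (hKnn u)
      rw [abs_pow]
      exact pow_le_pow_left₀ (abs_nonneg u) (hKM u hKu0) 2
  have hrc : Continuous r := by
    have : Differentiable ℝ r := fun s => (hr s).differentiableAt
    exact this.continuous
  have hIr : ∀ h : ℝ, Integrable (fun u => K u * r (-(h * u))) := by
    intro h
    have hcont : Continuous (fun u : ℝ => |r (-(h * u))|) :=
      (hrc.comp ((continuous_const.mul continuous_id).neg)).abs
    obtain ⟨u0, hu0mem, hu0'⟩ := isCompact_Icc.exists_isMaxOn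
      (Set.nonempty_Icc.mpr (by linarith : -M ≤ M)) hcont.continuousOn
    have hu0 : ∀ x ∈ Set.Icc (-M) M, |r (-(h * x))| ≤ |r (-(h * u0))| := fun x hx => hu0' hx
    refine (hKint.const_mul (|r (-(h * u0))|)).mono'
      ((hKmeas.mul ((hrc.measurable).comp
        ((measurable_const.mul measurable_id).neg))).aestronglyMeasurable) ?_
    filter_upwards with u
    by_cases hKu0 : K u = 0
    · simp [hKu0]
    · have hu : u ∈ Set.Icc (-M) M := by
        have := hKM u hKu0
        exact Set.mem_Icc.mpr ⟨neg_le_of_abs_le this, le_of_abs_le this⟩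
      rw [Real.norm_eq_abs, abs_mul, abs_of_nonneg (hKnn u), mul_comm]
      exact mul_le_mul_of_nonneg_right (hu0 u hu) (hKnn u)
  -- splitting
  have hsplit : ∀ h : ℝ,
      (∫ u, K u * g (y - h * u)) = b * h ^ 2 * q + ∫ u, K u * r (-(h * u)) := by
    intro h
    have hpt : ∀ u, K u * g (y - h * u)
        = ((-(a * h)) * (u * K u) + (b * h ^ 2) * (u ^ 2 * K u)) + K u * r (-(h * u)) := by
      intro u
      have h1 : g (y - h * u) = g (y + -(h * u)) := by ring_nf
      have h2 : g (y + -(h * u)) = r (-(h * u)) + a * (-(h * u)) + b * (-(h * u)) ^ 2 := by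
        rw [hrdef]; ring
      rw [h1, h2]; ring
    calc (∫ u, K u * g (y - h * u))
        = ∫ u, (((-(a * h)) * (u * K u) + (b * h ^ 2) * (u ^ 2 * K u)) + K u * r (-(h * u))) :=
          integral_congr_ae (Filter.Eventually.of_forall hpt)
      _ = (∫ u, ((-(a * h)) * (u * K u) + (b * h ^ 2) * (u ^ 2 * K u)))
            + ∫ u, K u * r (-(h * u)) :=
          integral_add ((hI1.const_mul _).add (hI2.const_mul _)) (hIr h)
      _ = ((∫ u, (-(a * h)) * (u * K u)) + ∫ u, (b * h ^ 2) * (u ^ 2 * K u))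
            + ∫ u, K u * r (-(h * u)) := by
          rw [integral_add (hI1.const_mul _) (hI2.const_mul _)]
      _ = b * h ^ 2 * q + ∫ u, K u * r (-(h * u)) := by
          rw [integral_const_mul, integral_const_mul, hKu, ← hqdef]
          ring
  -- change of variables
  have hcv : ∀ h : ℝ, 0 < h →
      (∫ t, K ((y - t) / h) * (f t - f y) * p t) = h * ∫ u, K u * g (y - h * u) := by
    intro h hh
    have h1 : (∫ t, K ((y - t) / h) * (f t - f y) * p t)
        = ∫ t, (fun s => K (s / h) * g (y - s)) (y - t) := by
      congr 1; ext t
      simp only [hgdef]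
      rw [show y - (y - t) = t by ring]
      ring
    rw [h1, integral_sub_left_eq_self (fun s => K (s / h) * g (y - s)) volume y]
    have h2 : (∫ s, K (s / h) * g (y - s))
        = ∫ s, (fun u => K u * g (y - h * u)) (s / h) := by
      congr 1; ext s
      show K (s / h) * g (y - s) = K (s / h) * g (y - h * (s / h))
      rw [show h * (s / h) = s from by field_simp]
    rw [h2, MeasureTheory.Measure.integral_comp_div (fun u => K u * g (y - h * u)) h,
      abs_of_pos hh, smul_eq_mul]
  -- the remainder term tends to 0
  have hq0 : 0 < q := hKu2pos
  have hElim : Tendsto (fun h => (∫ u, K u * r (-(h * u))) / h ^ 2) (𝓝[>] (0:ℝ)) (𝓝 0) := by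
    rw [Metric.tendsto_nhdsWithin_nhds]
    intro ε hε
    have hε' : 0 < ε / (2 * (q + 1)) := by positivity
    obtain ⟨δ, hδ0, hδ⟩ := hrbound _ hε'
    refine ⟨δ / M, by positivity, fun h hh hdist => ?_⟩
    have hhpos : 0 < h := hh
    rw [Real.dist_eq, sub_zero, abs_of_pos hhpos] at hdist
    have hhM : h * M ≤ δ := ((lt_div_iff₀ hM0).mp hdist).le
    have hbnd : ∀ u, ‖K u * r (-(h * u))‖ ≤ (ε / (2 * (q + 1)) * h ^ 2) * (u ^ 2 * K u) := by
      intro u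
      by_cases hKu0 : K u = 0
      · simp [hKu0]
      · have hu : |u| ≤ M := hKM u hKu0
        have habs : |(-(h * u))| ≤ δ := by
          rw [abs_neg, abs_mul, abs_of_pos hhpos]
          nlinarith [abs_nonneg u]
        have h2 := hδ _ habs
        rw [Real.norm_eq_abs, abs_mul, abs_of_nonneg (hKnn u)]
        calc K u * |r (-(h * u))|
            ≤ K u * (ε / (2 * (q + 1)) * (-(h * u)) ^ 2) :=
              mul_le_mul_of_nonneg_left h2 (hKnn u)
          _ = (ε / (2 * (q + 1)) * h ^ 2) * (u ^ 2 * K u) := by ring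
    have hnormint : ‖∫ u, K u * r (-(h * u))‖ ≤ (ε / (2 * (q + 1)) * h ^ 2) * q := by
      have := norm_integral_le_of_norm_le (hI2.const_mul (ε / (2 * (q + 1)) * h ^ 2))
        (Filter.Eventually.of_forall hbnd)
      rwa [integral_const_mul, ← hqdef] at this
    rw [Real.dist_eq, sub_zero, abs_div, abs_pow, sq_abs, div_lt_iff₀ (by positivity : (0:ℝ) < h ^ 2)]
    rw [Real.norm_eq_abs] at hnormint
    have hlt : ε / (2 * (q + 1)) * q < ε := by
      rw [div_mul_eq_mul_div, div_lt_iff₀ (by positivity : (0:ℝ) < 2 * (q + 1))]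
      nlinarith
    calc |∫ u, K u * r (-(h * u))| ≤ (ε / (2 * (q + 1)) * h ^ 2) * q := hnormint
      _ = (ε / (2 * (q + 1)) * q) * h ^ 2 := by ring
      _ < ε * h ^ 2 := mul_lt_mul_of_pos_right hlt (by positivity)
  -- assemble
  have hfinal : ∀ᶠ h in 𝓝[>] (0:ℝ),
      b * q + (∫ u, K u * r (-(h * u))) / h ^ 2 = B h / h ^ 2 := by
    filter_upwards [self_mem_nhdsWithin] with h hh
    have hhpos : (0:ℝ) < h := hh
    have hne : h ≠ 0 := hhpos.ne'
    rw [hB h, hcv h hhpos, hsplit h]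
    field_simp
  have := (tendsto_const_nhds.add hElim).congr' hfinal
  simpa using this
end

section
/- Let Y_1, …, Y_n be i.i.d. real random variables with density p bounded by M, let f : ℝ → ℝ be Lipschitz with constant L, let K : ℝ → [0,∞) satisfy ∫ u² K²(u) du < ∞, fix y ∈ ℝ, h > 0, and define m̂₁(y) = (1/(nh)) Σ_{i=1}^n K((y − Y_i)/h)(f(Y_i) − f(y)). Then Var(m̂₁(y)) ≤ (L² M h / n) ∫ u² K²(u) du; in particular Var(m̂₁(y)) = O(h/n), which is negligible compared with the O(1/(nh)) variance of the noise term when h → 0. -/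
open MeasureTheory ProbabilityTheory Filter
open scoped ENNReal NNReal Topology

/-- Variance of the bias term of the Nadaraya–Watson estimator:
if the `Yᵢ` are i.i.d. with density `p ≤ M`, `f` is `L`-Lipschitz and `∫u²K²(u)du < ∞`,
then `m̂₁(y) = (1/(nh)) Σᵢ K((y − Yᵢ)/h)(f(Yᵢ) − f(y))` satisfies
`Var(m̂₁(y)) ≤ (L²Mh/n) ∫u²K²(u)du`. -/
theorem stmt10
    {Ω : Type*} [MeasurableSpace Ω] {μ : Measure Ω} [IsProbabilityMeasure μ]
    (n : ℕ) (hn : 0 < n)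
    (Y : Fin n → Ω → ℝ) (hYmeas : ∀ i, Measurable (Y i))
    (p : ℝ → ℝ) (hpnn : ∀ t, 0 ≤ p t) (hpmeas : Measurable p)
    (M : ℝ) (hpM : ∀ t, p t ≤ M)
    (hYlaw : ∀ i, μ.map (Y i) = volume.withDensity (fun t => ENNReal.ofReal (p t)))
    (hYindep : iIndepFun Y μ)
    (L : ℝ≥0) (f : ℝ → ℝ) (hf : LipschitzWith L f)
    (K : ℝ → ℝ) (hKmeas : Measurable K) (hKnn : ∀ u, 0 ≤ K u)
    (hK2int : Integrable (fun u => u ^ 2 * K u ^ 2) volume)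
    (y h : ℝ) (hh : 0 < h)
    (m1 : Ω → ℝ)
    (hm1 : m1 = fun ω => (1 / (n * h)) * ∑ i, K ((y - Y i ω) / h) * (f (Y i ω) - f y)) :
    variance m1 μ ≤ ((L : ℝ) ^ 2 * M * h / n) * ∫ u, u ^ 2 * K u ^ 2 := by
  have hM0 : 0 ≤ M := le_trans (hpnn 0) (hpM 0)
  set g : ℝ → ℝ := fun t => K ((y - t) / h) * (f t - f y) with hgdef
  have hgmeas : Measurable g := by
    apply Measurable.mul
    · exact hKmeas.comp ((measurable_const.sub measurable_id).div_const h)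
    · exact (hf.continuous.measurable).sub measurable_const
  set I : ℝ := ∫ u, u ^ 2 * K u ^ 2 with hI
  have hI0 : 0 ≤ I := integral_nonneg fun u => by positivity
  -- the rescaled kernel function
  set F : ℝ → ℝ := fun u => u ^ 2 * K u ^ 2 with hFdef
  have hFcomp_int : Integrable (fun t => F ((y - t) / h)) volume := by
    have h1 : Integrable (fun s : ℝ => F (s / h)) volume := hK2int.comp_div hh.ne'
    simpa using h1.comp_sub_left y
  have hFcomp_eq : (∫ t, F ((y - t) / h)) = h * I := by
    have h1 : (∫ t, F ((y - t) / h)) = ∫ s, F (s / h) :=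
      integral_sub_left_eq_self (fun s => F (s / h)) volume y
    rw [h1, MeasureTheory.Measure.integral_comp_div (fun u => F u) h,
      abs_of_pos hh, smul_eq_mul]
  -- pointwise bound for g² :  g t ^ 2 ≤ L² h² F((y-t)/h)
  have hgsq_le : ∀ t, g t ^ 2 ≤ (L : ℝ) ^ 2 * h ^ 2 * F ((y - t) / h) := by
    intro t
    have hft : |f t - f y| ≤ (L : ℝ) * |t - y| := by
      have := hf.dist_le_mul t y
      simpa [Real.dist_eq] using this
    have h2 : (f t - f y) ^ 2 ≤ (L : ℝ) ^ 2 * (y - t) ^ 2 := by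
      nlinarith [mul_self_le_mul_self (abs_nonneg (f t - f y)) hft,
        abs_mul_abs_self (f t - f y), abs_mul_abs_self (t - y), abs_nonneg (t - y)]
    have h3 : ((y - t) / h) ^ 2 = (y - t) ^ 2 / h ^ 2 := by rw [div_pow]
    have hK0 : 0 ≤ K ((y - t) / h) ^ 2 := sq_nonneg _
    calc g t ^ 2 = K ((y - t) / h) ^ 2 * (f t - f y) ^ 2 := by
          simp only [hgdef]; ring
      _ ≤ K ((y - t) / h) ^ 2 * ((L : ℝ) ^ 2 * (y - t) ^ 2) := by
          exact mul_le_mul_of_nonneg_left h2 hK0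
      _ = (L : ℝ) ^ 2 * h ^ 2 * F ((y - t) / h) := by
          simp only [hFdef, h3]
          field_simp
  -- the dominating function is integrable
  set B : ℝ → ℝ := fun t => (L : ℝ) ^ 2 * M * h ^ 2 * F ((y - t) / h) with hBdef
  have hBint : Integrable B volume := hFcomp_int.const_mul _
  -- p t * g t ^ 2 ≤ B t
  have hpg_le : ∀ t, p t * g t ^ 2 ≤ B t := by
    intro t
    have hFnn : 0 ≤ F ((y - t) / h) := by
      simp only [hFdef]; positivity
    calc p t * g t ^ 2 ≤ M * g t ^ 2 :=
          mul_le_mul_of_nonneg_right (hpM t) (sq_nonneg _)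
      _ ≤ M * ((L : ℝ) ^ 2 * h ^ 2 * F ((y - t) / h)) :=
          mul_le_mul_of_nonneg_left (hgsq_le t) hM0
      _ = B t := by simp only [hBdef]; ring
  have hpgmeas : Measurable fun t => p t * g t ^ 2 :=
    hpmeas.mul (hgmeas.pow_const 2)
  have hpgint : Integrable (fun t => p t * g t ^ 2) volume := by
    refine hBint.mono' hpgmeas.aestronglyMeasurable ?_
    filter_upwards with t
    rw [Real.norm_eq_abs, abs_of_nonneg (mul_nonneg (hpnn t) (sq_nonneg _))]
    exact hpg_le t
  have hintB : (∫ t, B t) = (L : ℝ) ^ 2 * M * h ^ 2 * (h * I) := by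
    rw [hBdef]
    rw [integral_const_mul, hFcomp_eq]
  -- second moment of g(Yᵢ)
  have hmap : ∀ i, (∫ ω, g (Y i ω) ^ 2 ∂μ) = ∫ t, p t * g t ^ 2 := by
    intro i
    have h1 : (∫ ω, g (Y i ω) ^ 2 ∂μ) = ∫ t, g t ^ 2 ∂(μ.map (Y i)) := by
      rw [integral_map (hYmeas i).aemeasurable
        ((hgmeas.pow_const 2).aestronglyMeasurable)]
    rw [h1, hYlaw i]
    have h2 : (fun t => ENNReal.ofReal (p t)) = fun t => ((Real.toNNReal (p t) : ℝ≥0) : ℝ≥0∞) := by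
      funext t; rfl
    rw [h2, integral_withDensity_eq_integral_smul (hpmeas.real_toNNReal)]
    congr 1
    funext t
    rw [NNReal.smul_def, smul_eq_mul, Real.coe_toNNReal _ (hpnn t)]
  -- integrability of g(Yᵢ)² hence Memℒp 2
  have hgYint : ∀ i, Integrable (fun ω => g (Y i ω) ^ 2) μ := by
    intro i
    have hw : Integrable (fun t => g t ^ 2) (μ.map (Y i)) := by
      rw [hYlaw i]
      have h2 : (fun t => ENNReal.ofReal (p t))
          = fun t => ((Real.toNNReal (p t) : ℝ≥0) : ℝ≥0∞) := by
        funext t; rfl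
      rw [h2, integrable_withDensity_iff_integrable_smul (hpmeas.real_toNNReal)]
      have : (fun t => (Real.toNNReal (p t) : ℝ≥0) • (g t ^ 2)) = fun t => p t * g t ^ 2 := by
        funext t
        rw [NNReal.smul_def, smul_eq_mul, Real.coe_toNNReal _ (hpnn t)]
      rw [this]
      exact hpgint
    exact (integrable_map_measure ((hgmeas.pow_const 2).aestronglyMeasurable)
      (hYmeas i).aemeasurable).mp hw
  have hX : ∀ i : Fin n, MemLp (fun ω => g (Y i ω)) 2 μ := by
    intro i
    have hmX : AEStronglyMeasurable (fun ω => g (Y i ω)) μ :=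
      (hgmeas.comp (hYmeas i)).aestronglyMeasurable
    rw [memLp_two_iff_integrable_sq hmX]
    exact hgYint i
  -- variance bound for each term
  have hvar_le : ∀ i : Fin n, variance (fun ω => g (Y i ω)) μ ≤ (L : ℝ) ^ 2 * M * h ^ 3 * I := by
    intro i
    have h1 : variance (fun ω => g (Y i ω)) μ ≤ ∫ ω, g (Y i ω) ^ 2 ∂μ := by
      have hmX : AEStronglyMeasurable (fun ω => g (Y i ω)) μ :=
        (hgmeas.comp (hYmeas i)).aestronglyMeasurable
      have := variance_le_expectation_sq (μ := μ) hmX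
      simpa [Pi.pow_apply] using this
    refine h1.trans ?_
    rw [hmap i]
    calc (∫ t, p t * g t ^ 2) ≤ ∫ t, B t :=
          integral_mono hpgint hBint hpg_le
      _ = (L : ℝ) ^ 2 * M * h ^ 3 * I := by rw [hintB]; ring
  -- decompose m1
  have hm1' : m1 = (1 / (n * h)) • (∑ i : Fin n, fun ω => g (Y i ω)) := by
    rw [hm1]
    funext ω
    simp only [Pi.smul_apply, Finset.sum_apply, smul_eq_mul, hgdef]
  have hindep : Set.Pairwise ↑(Finset.univ : Finset (Fin n))
      fun i j => IndepFun (fun ω => g (Y i ω)) (fun ω => g (Y j ω)) μ := by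
    intro i _ j _ hij
    exact (hYindep.indepFun hij).comp hgmeas hgmeas
  rw [hm1', variance_smul]
  rw [IndepFun.variance_sum (fun i _ => hX i) hindep]
  have hsum_le : (∑ i : Fin n, variance (fun ω => g (Y i ω)) μ)
      ≤ n * ((L : ℝ) ^ 2 * M * h ^ 3 * I) := by
    calc (∑ i : Fin n, variance (fun ω => g (Y i ω)) μ)
        ≤ ∑ _i : Fin n, (L : ℝ) ^ 2 * M * h ^ 3 * I :=
          Finset.sum_le_sum fun i _ => hvar_le i
      _ = n * ((L : ℝ) ^ 2 * M * h ^ 3 * I) := by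
          rw [Finset.sum_const, Finset.card_univ, Fintype.card_fin, nsmul_eq_mul]
  have hc : (0 : ℝ) ≤ (1 / (n * h)) ^ 2 := sq_nonneg _
  calc (1 / (n * h)) ^ 2 * ∑ i : Fin n, variance (fun ω => g (Y i ω)) μ
      ≤ (1 / (n * h)) ^ 2 * (n * ((L : ℝ) ^ 2 * M * h ^ 3 * I)) :=
        mul_le_mul_of_nonneg_left hsum_le hc
    _ = ((L : ℝ) ^ 2 * M * h / n) * I := by
        have hn' : (n : ℝ) ≠ 0 := Nat.cast_ne_zero.mpr hn.ne'
        field_simp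
end

section
/- Let N_1, …, N_n be i.i.d. N(0, σ²) and Φ_1, …, Φ_n be i.i.d. N(0, σ_Φ²), all mutually independent, σ², σ_Φ² > 0, and set α = σ² / (σ² + σ_Φ²), A_i = N_i + Φ_i, B₁ = (α − 1)N_1 + αΦ_1 and D₁ = B₁². Then for all real coefficients c_1, …, c_n, E[(Σ_{i=1}^n c_i A_i)² · D₁] = E[(Σ_{i=1}^n c_i A_i)²] · E[D₁]. -/
open MeasureTheory ProbabilityTheory
open scoped ENNReal NNReal
open Filter

namespace Stmt15Aux

lemma integrable_pow_exp {b : ℝ} (hb : 0 < b) (k : ℕ) :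
    Integrable fun x : ℝ => x ^ k * Real.exp (-b * x ^ 2) := by
  have h := integrable_rpow_mul_exp_neg_mul_sq hb (s := (k : ℝ))
      (lt_of_lt_of_le (by norm_num) (Nat.cast_nonneg k))
  simpa [Real.rpow_natCast] using h

lemma tendsto_pow_exp_atTop {b : ℝ} (hb : 0 < b) (k : ℕ) :
    Tendsto (fun x : ℝ => x ^ k * Real.exp (-b * x ^ 2)) atTop (nhds 0) := by
  have hlin : Tendsto (fun x : ℝ => -(1/2) * x) atTop atBot := by
    have h1 : Tendsto (fun x : ℝ => (1/2) * x) atTop atTop :=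
      Filter.Tendsto.const_mul_atTop (by norm_num : (0:ℝ) < 1/2) tendsto_id
    have h2 := (Filter.tendsto_neg_atTop_atBot (G := ℝ)).comp h1
    refine h2.congr fun x => ?_
    simp [Function.comp]
  have hexp : Tendsto (fun x : ℝ => Real.exp (-(1/2) * x)) atTop (nhds 0) :=
    Real.tendsto_exp_atBot.comp hlin
  have h := (rpow_mul_exp_neg_mul_sq_isLittleO_exp_neg hb (k : ℝ)).tendsto_zero_of_tendsto hexp
  simpa [Real.rpow_natCast] using h

lemma tendsto_pow_exp_atBot {b : ℝ} (hb : 0 < b) (k : ℕ) :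
    Tendsto (fun x : ℝ => x ^ k * Real.exp (-b * x ^ 2)) atBot (nhds 0) := by
  have h : Tendsto (fun x : ℝ => ((-1:ℝ)^k) * ((x:ℝ) ^ k * Real.exp (-b * x ^ 2)))
      atTop (nhds 0) := by
    simpa using (tendsto_pow_exp_atTop hb k).const_mul ((-1:ℝ)^k)
  have h2 := h.comp tendsto_neg_atBot_atTop
  refine h2.congr fun x => ?_
  simp only [Function.comp_apply, neg_sq, ← mul_assoc, ← mul_pow]
  norm_num

lemma parts {b : ℝ} (hb : 0 < b) (m : ℕ) :
    ∫ x : ℝ, (((m:ℝ)+1) * x ^ m - 2*b*x^(m+2)) * Real.exp (-b*x^2) = 0 := by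
  set g : ℝ → ℝ := fun x => x ^ (m+1) * Real.exp (-b * x^2) with hg
  set g' : ℝ → ℝ := fun x => (((m:ℝ)+1) * x ^ m - 2*b*x^(m+2)) * Real.exp (-b*x^2) with hg'
  have hderiv : ∀ x : ℝ, HasDerivAt g (g' x) x := by
    intro x
    have h1 : HasDerivAt (fun y : ℝ => y ^ (m+1)) (((m:ℝ)+1) * x ^ m) x := by
      simpa using hasDerivAt_pow (m+1) x
    have h2 : HasDerivAt (fun y : ℝ => Real.exp (-b * y^2))
        (Real.exp (-b*x^2) * (-b * (2 * x^1))) x :=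
      (((hasDerivAt_pow 2 x).const_mul (-b)).exp)
    have h3 := h1.mul h2
    refine h3.congr_deriv ?_
    simp only [hg']
    ring
  have hint : Integrable g' := by
    have he : g' = fun x => (((m:ℝ)+1)) * (x^m * Real.exp (-b*x^2))
        - (2*b) * (x^(m+2) * Real.exp (-b*x^2)) := by
      funext x; simp only [hg']; ring
    rw [he]
    exact ((integrable_pow_exp hb m).const_mul _).sub ((integrable_pow_exp hb (m+2)).const_mul _)
  have htop : Tendsto g atTop (nhds 0) := tendsto_pow_exp_atTop hb (m+1)
  have hbot : Tendsto g atBot (nhds 0) := tendsto_pow_exp_atBot hb (m+1)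
  have hIoi : ∫ x in Set.Ioi (0:ℝ), g' x = 0 - g 0 :=
    integral_Ioi_of_hasDerivAt_of_tendsto' (fun x _ => hderiv x) hint.integrableOn htop
  have hIic : ∫ x in Set.Iic (0:ℝ), g' x = g 0 - 0 :=
    integral_Iic_of_hasDerivAt_of_tendsto' (fun x _ => hderiv x) hint.integrableOn hbot
  have hsum := intervalIntegral.integral_Iic_add_Ioi (f := g') (b := 0) (μ := volume)
    hint.integrableOn hint.integrableOn
  rw [hIic, hIoi] at hsum
  show (∫ x : ℝ, g' x) = 0
  rw [← hsum]; ring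

lemma J_rec {b : ℝ} (hb : 0 < b) (m : ℕ) :
    ((m:ℝ)+1) * ∫ x : ℝ, x ^ m * Real.exp (-b*x^2) =
      2*b * ∫ x : ℝ, x^(m+2) * Real.exp (-b*x^2) := by
  have h := parts hb m
  have hexp : (fun x : ℝ => (((m:ℝ)+1) * x ^ m - 2*b*x^(m+2)) * Real.exp (-b*x^2))
      = fun x : ℝ => (((m:ℝ)+1)) * (x^m * Real.exp (-b*x^2))
        - (2*b) * (x^(m+2) * Real.exp (-b*x^2)) := by
    funext x; ring
  rw [hexp, integral_sub ((integrable_pow_exp hb m).const_mul _)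
    ((integrable_pow_exp hb (m+2)).const_mul _), integral_const_mul, integral_const_mul] at h
  linarith

lemma J_odd {b : ℝ} {k : ℕ} (hk : Odd k) :
    ∫ x : ℝ, x ^ k * Real.exp (-b*x^2) = 0 := by
  have h := integral_neg_eq_self (fun x : ℝ => x ^ k * Real.exp (-b*x^2)) volume
  have h2 : ∫ x : ℝ, (-x) ^ k * Real.exp (-b*(-x)^2)
      = - ∫ x : ℝ, x ^ k * Real.exp (-b*x^2) := by
    rw [← integral_neg]
    congr 1; funext x
    rw [hk.neg_pow, neg_sq]; ring
  rw [h2] at h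
  linarith

section Gauss

variable {v : ℝ≥0}

lemma gauss_int (hv : v ≠ 0) (f : ℝ → ℝ) :
    ∫ x, f x ∂(gaussianReal 0 v) = ∫ x, gaussianPDFReal 0 v x * f x := by
  rw [gaussianReal_of_var_ne_zero _ hv, gaussianPDF_def]
  have he : (fun x => ENNReal.ofReal (gaussianPDFReal 0 v x))
      = fun x => ((Real.toNNReal (gaussianPDFReal 0 v x) : ℝ≥0) : ℝ≥0∞) := rfl
  rw [he, integral_withDensity_eq_integral_smul (measurable_gaussianPDFReal 0 v).real_toNNReal]
  congr 1; funext x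
  simp [NNReal.smul_def, Real.coe_toNNReal _ (gaussianPDFReal_nonneg 0 v x)]

lemma gauss_integrable (hv : v ≠ 0) (f : ℝ → ℝ)
    (h : Integrable (fun x => gaussianPDFReal 0 v x * f x)) :
    Integrable f (gaussianReal 0 v) := by
  rw [gaussianReal_of_var_ne_zero _ hv, gaussianPDF_def]
  have he : (fun x => ENNReal.ofReal (gaussianPDFReal 0 v x))
      = fun x => ((Real.toNNReal (gaussianPDFReal 0 v x) : ℝ≥0) : ℝ≥0∞) := rfl
  rw [he, integrable_withDensity_iff_integrable_smul
    (measurable_gaussianPDFReal 0 v).real_toNNReal]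
  refine h.congr (Filter.Eventually.of_forall fun x => ?_)
  simp [NNReal.smul_def, Real.coe_toNNReal _ (gaussianPDFReal_nonneg 0 v x)]

lemma pdf_mul_pow (hv : v ≠ 0) (k : ℕ) :
    (fun x => gaussianPDFReal 0 v x * x ^ k)
      = fun x : ℝ => (Real.sqrt (2*Real.pi*v))⁻¹
          * (x ^ k * Real.exp (-(2*(v:ℝ))⁻¹ * x^2)) := by
  funext x
  rw [gaussianPDFReal]
  rw [show -(x-0)^2/(2*(v:ℝ)) = -(2*(v:ℝ))⁻¹ * x^2 by ring]
  ring

lemma hvb (hv : v ≠ 0) : (0:ℝ) < (2*(v:ℝ))⁻¹ := by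
  have h0 : (0:ℝ) < v := by
    simpa [pos_iff_ne_zero] using hv
  positivity

lemma gauss_mom (hv : v ≠ 0) (k : ℕ) :
    ∫ x, x ^ k ∂(gaussianReal 0 v)
      = (Real.sqrt (2*Real.pi*v))⁻¹ * ∫ x : ℝ, x ^ k * Real.exp (-(2*(v:ℝ))⁻¹ * x^2) := by
  rw [gauss_int hv fun x => x ^ k, pdf_mul_pow hv k, integral_const_mul]

lemma gaussMint (hv : v ≠ 0) (k : ℕ) : Integrable (fun x => x ^ k) (gaussianReal 0 v) := by
  refine gauss_integrable hv _ ?_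
  rw [pdf_mul_pow hv k]
  exact (Stmt15Aux.integrable_pow_exp (hvb hv) k).const_mul _

lemma gauss_norm (hv : v ≠ 0) :
    (Real.sqrt (2*Real.pi*v))⁻¹ * ∫ x : ℝ, x ^ 0 * Real.exp (-(2*(v:ℝ))⁻¹ * x^2) = 1 := by
  rw [← gauss_mom hv 0]
  simp

lemma gaussM1 (hv : v ≠ 0) : ∫ x, x ∂(gaussianReal 0 v) = 0 := by
  have h := gauss_mom hv 1
  rw [Stmt15Aux.J_odd (by decide : Odd 1), mul_zero] at h
  simpa using h

lemma gaussM3 (hv : v ≠ 0) : ∫ x, x ^ 3 ∂(gaussianReal 0 v) = 0 := by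
  rw [gauss_mom hv 3, Stmt15Aux.J_odd (by decide : Odd 3), mul_zero]

lemma gaussM2 (hv : v ≠ 0) : ∫ x, x ^ 2 ∂(gaussianReal 0 v) = v := by
  have hvpos : (0:ℝ) < v := by
    simpa [pos_iff_ne_zero] using hv
  have hrec := Stmt15Aux.J_rec (hvb hv) 0
  have hnorm := gauss_norm hv
  rw [gauss_mom hv 2]
  have h2b : 2*(2*(v:ℝ))⁻¹ = (v:ℝ)⁻¹ := by
    field_simp
  rw [h2b] at hrec
  have hvne : (v:ℝ) ≠ 0 := ne_of_gt hvpos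
  have hJ2 : ∫ x : ℝ, x ^ 2 * Real.exp (-(2*(v:ℝ))⁻¹ * x^2)
      = (v:ℝ) * ∫ x : ℝ, x ^ 0 * Real.exp (-(2*(v:ℝ))⁻¹ * x^2) := by
    have h := congrArg (fun t => (v:ℝ) * t) hrec
    simp only [← mul_assoc, mul_inv_cancel₀ hvne, one_mul] at h
    linarith [h]
  rw [hJ2, ← mul_assoc, mul_comm ((Real.sqrt (2*Real.pi*v))⁻¹) ((v:ℝ)), mul_assoc, hnorm, mul_one]

lemma gaussM4 (hv : v ≠ 0) : ∫ x, x ^ 4 ∂(gaussianReal 0 v) = 3*(v:ℝ)^2 := by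
  have hvpos : (0:ℝ) < v := by
    simpa [pos_iff_ne_zero] using hv
  have hrec := Stmt15Aux.J_rec (hvb hv) 2
  have h2 := gaussM2 hv
  rw [gauss_mom hv 2] at h2
  rw [gauss_mom hv 4]
  have h2b : 2*(2*(v:ℝ))⁻¹ = (v:ℝ)⁻¹ := by field_simp
  rw [h2b] at hrec
  -- hrec : (2+1) * J2 = v⁻¹ * J4
  have hvne : (v:ℝ) ≠ 0 := ne_of_gt hvpos
  have hJ4 : ∫ x : ℝ, x ^ (2+2) * Real.exp (-(2*(v:ℝ))⁻¹ * x^2)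
      = 3*(v:ℝ) * ∫ x : ℝ, x ^ 2 * Real.exp (-(2*(v:ℝ))⁻¹ * x^2) := by
    have h := congrArg (fun t => (v:ℝ) * t) hrec
    simp only [← mul_assoc, mul_inv_cancel₀ hvne, one_mul] at h
    norm_num at h ⊢
    linarith [h]
  rw [hJ4]
  nlinarith [h2]

end Gauss
lemma gaussM0 {v : ℝ≥0} : ∫ x, x ^ 0 ∂(gaussianReal 0 v) = 1 := by simp

lemma gaussM1' {v : ℝ≥0} (hv : v ≠ 0) : ∫ x, x ^ 1 ∂(gaussianReal 0 v) = 0 := by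
  simp only [pow_one]; exact gaussM1 hv

section RV

variable {Ω : Type*} [MeasurableSpace Ω] {μ : Measure Ω}

lemma intg2 {f1 f2 : Ω → ℝ} (h1 : Integrable f1 μ) (h2 : Integrable f2 μ) :
    Integrable (fun ω => f1 ω + f2 ω) μ := h1.add h2
lemma intg3 {f1 f2 f3 : Ω → ℝ} (h1 : Integrable f1 μ) (h2 : Integrable f2 μ)
    (h3 : Integrable f3 μ) :
    Integrable (fun ω => f1 ω + f2 ω + f3 ω) μ := (h1.add h2).add h3
lemma intg4 {f1 f2 f3 f4 : Ω → ℝ} (h1 : Integrable f1 μ) (h2 : Integrable f2 μ)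
    (h3 : Integrable f3 μ) (h4 : Integrable f4 μ) :
    Integrable (fun ω => f1 ω + f2 ω + f3 ω + f4 ω) μ := ((h1.add h2).add h3).add h4
lemma intg5 {f1 f2 f3 f4 f5 : Ω → ℝ} (h1 : Integrable f1 μ) (h2 : Integrable f2 μ)
    (h3 : Integrable f3 μ) (h4 : Integrable f4 μ) (h5 : Integrable f5 μ) :
    Integrable (fun ω => f1 ω + f2 ω + f3 ω + f4 ω + f5 ω) μ :=
  (((h1.add h2).add h3).add h4).add h5

lemma isum3 {f1 f2 f3 : Ω → ℝ} (h1 : Integrable f1 μ) (h2 : Integrable f2 μ)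
    (h3 : Integrable f3 μ) :
    ∫ ω, f1 ω + f2 ω + f3 ω ∂μ
      = (∫ ω, f1 ω ∂μ) + (∫ ω, f2 ω ∂μ) + ∫ ω, f3 ω ∂μ := by
  rw [integral_add (intg2 h1 h2) h3, integral_add h1 h2]
lemma isum4 {f1 f2 f3 f4 : Ω → ℝ} (h1 : Integrable f1 μ) (h2 : Integrable f2 μ)
    (h3 : Integrable f3 μ) (h4 : Integrable f4 μ) :
    ∫ ω, f1 ω + f2 ω + f3 ω + f4 ω ∂μ
      = (∫ ω, f1 ω ∂μ) + (∫ ω, f2 ω ∂μ) + (∫ ω, f3 ω ∂μ) + ∫ ω, f4 ω ∂μ := by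
  rw [integral_add (intg3 h1 h2 h3) h4, isum3 h1 h2 h3]
lemma isum5 {f1 f2 f3 f4 f5 : Ω → ℝ} (h1 : Integrable f1 μ) (h2 : Integrable f2 μ)
    (h3 : Integrable f3 μ) (h4 : Integrable f4 μ) (h5 : Integrable f5 μ) :
    ∫ ω, f1 ω + f2 ω + f3 ω + f4 ω + f5 ω ∂μ
      = (∫ ω, f1 ω ∂μ) + (∫ ω, f2 ω ∂μ) + (∫ ω, f3 ω ∂μ) + (∫ ω, f4 ω ∂μ)
        + ∫ ω, f5 ω ∂μ := by
  rw [integral_add (intg4 h1 h2 h3 h4) h5, isum4 h1 h2 h3 h4]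

lemma rv_int {X : Ω → ℝ} (hX : Measurable X) {v : ℝ≥0}
    (hlaw : μ.map X = gaussianReal 0 v) (hv : v ≠ 0) (k : ℕ) :
    Integrable (fun ω => X ω ^ k) μ := by
  have h1 : Integrable (fun x => x ^ k) (μ.map X) := by rw [hlaw]; exact gaussMint hv k
  rw [integrable_map_measure (by fun_prop) hX.aemeasurable] at h1
  exact h1

lemma rv_mom {X : Ω → ℝ} (hX : Measurable X) {v : ℝ≥0}
    (hlaw : μ.map X = gaussianReal 0 v) (k : ℕ) :
    ∫ ω, X ω ^ k ∂μ = ∫ x, x ^ k ∂(gaussianReal 0 v) := by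
  rw [← hlaw, integral_map hX.aemeasurable (by fun_prop)]

variable {X Y : Ω → ℝ} {v w : ℝ≥0}

lemma mono_int (hX : Measurable X) (hY : Measurable Y)
    (hXY : IndepFun X Y μ) (hv : v ≠ 0) (hw : w ≠ 0)
    (hXl : μ.map X = gaussianReal 0 v) (hYl : μ.map Y = gaussianReal 0 w) (p q : ℕ) :
    Integrable (fun ω => X ω ^ p * Y ω ^ q) μ := by
  have hind : IndepFun (fun ω => X ω ^ p) (fun ω => Y ω ^ q) μ :=
    hXY.comp (measurable_id.pow_const p) (measurable_id.pow_const q)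
  exact hind.integrable_mul (rv_int hX hXl hv p) (rv_int hY hYl hw q)

lemma mono_eq (hX : Measurable X) (hY : Measurable Y)
    (hXY : IndepFun X Y μ) (hv : v ≠ 0) (hw : w ≠ 0)
    (hXl : μ.map X = gaussianReal 0 v) (hYl : μ.map Y = gaussianReal 0 w) (p q : ℕ) :
    ∫ ω, X ω ^ p * Y ω ^ q ∂μ
      = (∫ x, x ^ p ∂(gaussianReal 0 v)) * ∫ x, x ^ q ∂(gaussianReal 0 w) := by
  have hind : IndepFun (fun ω => X ω ^ p) (fun ω => Y ω ^ q) μ :=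
    hXY.comp (measurable_id.pow_const p) (measurable_id.pow_const q)
  rw [← rv_mom hX hXl p, ← rv_mom hY hYl q]
  exact hind.integral_fun_mul_eq_mul_integral (rv_int hX hXl hv p).aestronglyMeasurable (rv_int hY hYl hw q).aestronglyMeasurable

variable (hX : Measurable X) (hY : Measurable Y) (hXY : IndepFun X Y μ)
  (hv : v ≠ 0) (hw : w ≠ 0)
  (hXl : μ.map X = gaussianReal 0 v) (hYl : μ.map Y = gaussianReal 0 w)
  (a b : ℝ)

include hX hY hXY hv hw hXl hYl

lemma coreS2_int : Integrable (fun ω => (X ω + Y ω) * (X ω + Y ω)) μ := by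
  have e : (fun ω => (X ω + Y ω) * (X ω + Y ω)) = fun ω => X ω ^ 2 * Y ω ^ 0 + ((2:ℝ)) * (X ω ^ 1 * Y ω ^ 1) + X ω ^ 0 * Y ω ^ 2 := funext fun ω => by ring
  rw [e]
  exact intg3 (mono_int hX hY hXY hv hw hXl hYl 2 0) ((mono_int hX hY hXY hv hw hXl hYl 1 1).const_mul _) (mono_int hX hY hXY hv hw hXl hYl 0 2)

lemma coreS2_eq : ∫ ω, (X ω + Y ω) * (X ω + Y ω) ∂μ = (v : ℝ) + (w : ℝ) := by
  have e : (fun ω => (X ω + Y ω) * (X ω + Y ω)) = fun ω => X ω ^ 2 * Y ω ^ 0 + ((2:ℝ)) * (X ω ^ 1 * Y ω ^ 1) + X ω ^ 0 * Y ω ^ 2 := funext fun ω => by ring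
  rw [e, isum3 (mono_int hX hY hXY hv hw hXl hYl 2 0) ((mono_int hX hY hXY hv hw hXl hYl 1 1).const_mul _) (mono_int hX hY hXY hv hw hXl hYl 0 2)]
  simp only [integral_const_mul]
  rw [mono_eq hX hY hXY hv hw hXl hYl 2 0, mono_eq hX hY hXY hv hw hXl hYl 1 1, mono_eq hX hY hXY hv hw hXl hYl 0 2]
  rw [gaussM2 hv, gaussM2 hw, gaussM0, gaussM0, gaussM1' hv, gaussM1' hw]
  ring

lemma coreD_int : Integrable (fun ω => (a * X ω + b * Y ω) ^ 2) μ := by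
  have e : (fun ω => (a * X ω + b * Y ω) ^ 2) = fun ω => (a^2) * (X ω ^ 2 * Y ω ^ 0) + (2*a*b) * (X ω ^ 1 * Y ω ^ 1) + (b^2) * (X ω ^ 0 * Y ω ^ 2) := funext fun ω => by ring
  rw [e]
  exact intg3 ((mono_int hX hY hXY hv hw hXl hYl 2 0).const_mul _) ((mono_int hX hY hXY hv hw hXl hYl 1 1).const_mul _) ((mono_int hX hY hXY hv hw hXl hYl 0 2).const_mul _)

lemma coreD_eq : ∫ ω, (a * X ω + b * Y ω) ^ 2 ∂μ = a^2 * (v:ℝ) + b^2 * (w:ℝ) := by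
  have e : (fun ω => (a * X ω + b * Y ω) ^ 2) = fun ω => (a^2) * (X ω ^ 2 * Y ω ^ 0) + (2*a*b) * (X ω ^ 1 * Y ω ^ 1) + (b^2) * (X ω ^ 0 * Y ω ^ 2) := funext fun ω => by ring
  rw [e, isum3 ((mono_int hX hY hXY hv hw hXl hYl 2 0).const_mul _) ((mono_int hX hY hXY hv hw hXl hYl 1 1).const_mul _) ((mono_int hX hY hXY hv hw hXl hYl 0 2).const_mul _)]
  simp only [integral_const_mul]
  rw [mono_eq hX hY hXY hv hw hXl hYl 2 0, mono_eq hX hY hXY hv hw hXl hYl 1 1, mono_eq hX hY hXY hv hw hXl hYl 0 2]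
  rw [gaussM2 hv, gaussM2 hw, gaussM0, gaussM0, gaussM1' hv, gaussM1' hw]
  ring

lemma coreP3_int : Integrable (fun ω => (X ω + Y ω) * (a * X ω + b * Y ω) ^ 2) μ := by
  have e : (fun ω => (X ω + Y ω) * (a * X ω + b * Y ω) ^ 2) = fun ω => (a^2) * (X ω ^ 3 * Y ω ^ 0) + (2*a*b + a^2) * (X ω ^ 2 * Y ω ^ 1) + (b^2 + 2*a*b) * (X ω ^ 1 * Y ω ^ 2) + (b^2) * (X ω ^ 0 * Y ω ^ 3) := funext fun ω => by ring
  rw [e]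
  exact intg4 ((mono_int hX hY hXY hv hw hXl hYl 3 0).const_mul _) ((mono_int hX hY hXY hv hw hXl hYl 2 1).const_mul _) ((mono_int hX hY hXY hv hw hXl hYl 1 2).const_mul _) ((mono_int hX hY hXY hv hw hXl hYl 0 3).const_mul _)

lemma coreP3_eq : ∫ ω, (X ω + Y ω) * (a * X ω + b * Y ω) ^ 2 ∂μ = 0 := by
  have e : (fun ω => (X ω + Y ω) * (a * X ω + b * Y ω) ^ 2) = fun ω => (a^2) * (X ω ^ 3 * Y ω ^ 0) + (2*a*b + a^2) * (X ω ^ 2 * Y ω ^ 1) + (b^2 + 2*a*b) * (X ω ^ 1 * Y ω ^ 2) + (b^2) * (X ω ^ 0 * Y ω ^ 3) := funext fun ω => by ring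
  rw [e, isum4 ((mono_int hX hY hXY hv hw hXl hYl 3 0).const_mul _) ((mono_int hX hY hXY hv hw hXl hYl 2 1).const_mul _) ((mono_int hX hY hXY hv hw hXl hYl 1 2).const_mul _) ((mono_int hX hY hXY hv hw hXl hYl 0 3).const_mul _)]
  simp only [integral_const_mul]
  rw [mono_eq hX hY hXY hv hw hXl hYl 3 0, mono_eq hX hY hXY hv hw hXl hYl 2 1, mono_eq hX hY hXY hv hw hXl hYl 1 2, mono_eq hX hY hXY hv hw hXl hYl 0 3]
  rw [gaussM3 hv, gaussM3 hw, gaussM1' hv, gaussM1' hw]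
  ring

lemma coreP4_int : Integrable (fun ω => (X ω + Y ω) * (X ω + Y ω) * (a * X ω + b * Y ω) ^ 2) μ := by
  have e : (fun ω => (X ω + Y ω) * (X ω + Y ω) * (a * X ω + b * Y ω) ^ 2) = fun ω => (a^2) * (X ω ^ 4 * Y ω ^ 0) + (2*a*b + 2*a^2) * (X ω ^ 3 * Y ω ^ 1) + (a^2 + 4*a*b + b^2) * (X ω ^ 2 * Y ω ^ 2) + (2*b^2 + 2*a*b) * (X ω ^ 1 * Y ω ^ 3) + (b^2) * (X ω ^ 0 * Y ω ^ 4) := funext fun ω => by ring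
  rw [e]
  exact intg5 ((mono_int hX hY hXY hv hw hXl hYl 4 0).const_mul _) ((mono_int hX hY hXY hv hw hXl hYl 3 1).const_mul _) ((mono_int hX hY hXY hv hw hXl hYl 2 2).const_mul _) ((mono_int hX hY hXY hv hw hXl hYl 1 3).const_mul _) ((mono_int hX hY hXY hv hw hXl hYl 0 4).const_mul _)

lemma coreP4_eq (hab : a * (v:ℝ) + b * (w:ℝ) = 0) : ∫ ω, (X ω + Y ω) * (X ω + Y ω) * (a * X ω + b * Y ω) ^ 2 ∂μ = ((v:ℝ) + (w:ℝ)) * (a^2 * (v:ℝ) + b^2 * (w:ℝ)) := by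
  have e : (fun ω => (X ω + Y ω) * (X ω + Y ω) * (a * X ω + b * Y ω) ^ 2) = fun ω => (a^2) * (X ω ^ 4 * Y ω ^ 0) + (2*a*b + 2*a^2) * (X ω ^ 3 * Y ω ^ 1) + (a^2 + 4*a*b + b^2) * (X ω ^ 2 * Y ω ^ 2) + (2*b^2 + 2*a*b) * (X ω ^ 1 * Y ω ^ 3) + (b^2) * (X ω ^ 0 * Y ω ^ 4) := funext fun ω => by ring
  rw [e, isum5 ((mono_int hX hY hXY hv hw hXl hYl 4 0).const_mul _) ((mono_int hX hY hXY hv hw hXl hYl 3 1).const_mul _) ((mono_int hX hY hXY hv hw hXl hYl 2 2).const_mul _) ((mono_int hX hY hXY hv hw hXl hYl 1 3).const_mul _) ((mono_int hX hY hXY hv hw hXl hYl 0 4).const_mul _)]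
  simp only [integral_const_mul]
  rw [mono_eq hX hY hXY hv hw hXl hYl 4 0, mono_eq hX hY hXY hv hw hXl hYl 3 1, mono_eq hX hY hXY hv hw hXl hYl 2 2, mono_eq hX hY hXY hv hw hXl hYl 1 3, mono_eq hX hY hXY hv hw hXl hYl 0 4]
  rw [gaussM4 hv, gaussM4 hw, gaussM3 hv, gaussM3 hw, gaussM2 hv, gaussM2 hw,
    gaussM1' hv, gaussM1' hw, gaussM0, gaussM0]
  linear_combination (2*a*(v:ℝ) + 2*b*(w:ℝ)) * hab

lemma coreP4_eq' (hab : a * (v:ℝ) + b * (w:ℝ) = 0) :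
    ∫ ω, (X ω + Y ω) * (X ω + Y ω) * (a * X ω + b * Y ω) ^ 2 ∂μ
      = (∫ ω, (X ω + Y ω) * (X ω + Y ω) ∂μ) * ∫ ω, (a * X ω + b * Y ω) ^ 2 ∂μ := by
  rw [coreP4_eq hX hY hXY hv hw hXl hYl a b hab, coreS2_eq hX hY hXY hv hw hXl hYl,
    coreD_eq hX hY hXY hv hw hXl hYl]

end RV
end Stmt15Aux


open Stmt15Aux

/-- Decorrelation identity: with i.i.d. `N_i ~ N(0,σ²)`,
`Φ_i ~ N(0,σ_Φ²)` all mutually independent, `α = σ²/(σ² + σ_Φ²)`, `A_i = N_i + Φ_i`,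
`B₁ = (α−1)N₁ + αΦ₁` and `D₁ = B₁²`, for all real coefficients `c_i` one has
`E[(Σ c_i A_i)²·D₁] = E[(Σ c_i A_i)²]·E[D₁]`. -/
theorem stmt15
    {Ω : Type*} [MeasurableSpace Ω] {μ : Measure Ω} [IsProbabilityMeasure μ]
    (n : ℕ) (hn : 0 < n)
    (v vΦ : ℝ≥0) (hv : 0 < v) (hvΦ : 0 < vΦ)
    (N Φ : Fin n → Ω → ℝ)
    (hNmeas : ∀ i, Measurable (N i)) (hΦmeas : ∀ i, Measurable (Φ i))
    (hNlaw : ∀ i, μ.map (N i) = gaussianReal 0 v)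
    (hΦlaw : ∀ i, μ.map (Φ i) = gaussianReal 0 vΦ)
    (hindep : iIndepFun (Sum.elim N Φ) μ)
    (α : ℝ) (hα : α = (v : ℝ) / ((v : ℝ) + (vΦ : ℝ)))
    (i0 : Fin n) (hi0 : i0 = ⟨0, hn⟩)
    (A : Fin n → Ω → ℝ) (hA : A = fun i ω => N i ω + Φ i ω)
    (D1 : Ω → ℝ) (hD1 : D1 = fun ω => ((α - 1) * N i0 ω + α * Φ i0 ω) ^ 2)
    (c : Fin n → ℝ) :
    ∫ ω, (∑ i, c i * A i ω) ^ 2 * D1 ω ∂μ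
      = (∫ ω, (∑ i, c i * A i ω) ^ 2 ∂μ) * ∫ ω, D1 ω ∂μ := by
  classical
  simp only [hA, hD1]
  have hvne : v ≠ 0 := hv.ne'
  have hwne : vΦ ≠ 0 := hvΦ.ne'
  have hvR : (0:ℝ) < (v:ℝ) := hv
  have hwR : (0:ℝ) < (vΦ:ℝ) := hvΦ
  have hvwne : (v:ℝ) + (vΦ:ℝ) ≠ 0 := by positivity
  have hab : (α - 1) * (v:ℝ) + α * (vΦ:ℝ) = 0 := by
    rw [hα]; field_simp; ring
  have hfm : ∀ k : Fin n ⊕ Fin n, Measurable (Sum.elim N Φ k) := by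
    intro k
    cases k with
    | inl i => exact hNmeas i
    | inr i => exact hΦmeas i
  have hNΦ : ∀ i : Fin n, IndepFun (N i) (Φ i) μ := fun i =>
    hindep.indepFun (show (Sum.inl i : Fin n ⊕ Fin n) ≠ Sum.inr i by simp)
  have hpair : ∀ i j : Fin n, i ≠ j →
      IndepFun (fun ω => (N i ω, Φ i ω)) (fun ω => (N j ω, Φ j ω)) μ := fun i j hij =>
    hindep.indepFun_prodMk_prodMk hfm (Sum.inl i) (Sum.inr i) (Sum.inl j) (Sum.inr j)
      (by simp [hij]) (by simp) (by simp) (by simp [hij])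
  -- integrability of single A i and its mean
  have hIntN : ∀ i, Integrable (N i) μ := fun i => by
    simpa using rv_int (hNmeas i) (hNlaw i) hvne 1
  have hIntΦ : ∀ i, Integrable (Φ i) μ := fun i => by
    simpa using rv_int (hΦmeas i) (hΦlaw i) hwne 1
  have hIntA : ∀ i, Integrable (fun ω => N i ω + Φ i ω) μ := fun i =>
    intg2 (hIntN i) (hIntΦ i)
  have hEN : ∀ i, ∫ ω, N i ω ∂μ = 0 := fun i => by
    have h := rv_mom (hNmeas i) (hNlaw i) 1
    simp only [pow_one] at h
    rw [h, gaussM1 hvne]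
  have hEΦ : ∀ i, ∫ ω, Φ i ω ∂μ = 0 := fun i => by
    have h := rv_mom (hΦmeas i) (hΦlaw i) 1
    simp only [pow_one] at h
    rw [h, gaussM1 hwne]
  have hEA : ∀ i, ∫ ω, (N i ω + Φ i ω) ∂μ = 0 := fun i => by
    rw [integral_add (hIntN i) (hIntΦ i), hEN i, hEΦ i, add_zero]
  -- D integrable
  have hIntD : Integrable (fun ω => ((α - 1) * N i0 ω + α * Φ i0 ω) ^ 2) μ :=
    coreD_int (hNmeas i0) (hΦmeas i0) (hNΦ i0) hvne hwne (hNlaw i0) (hΦlaw i0) (α-1) α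
  -- Ai0 * D integrable
  have hIntA0D : Integrable
      (fun ω => (N i0 ω + Φ i0 ω) * ((α - 1) * N i0 ω + α * Φ i0 ω) ^ 2) μ :=
    coreP3_int (hNmeas i0) (hΦmeas i0) (hNΦ i0) hvne hwne (hNlaw i0) (hΦlaw i0) (α-1) α
  have hEA0D : ∫ ω, (N i0 ω + Φ i0 ω) * ((α - 1) * N i0 ω + α * Φ i0 ω) ^ 2 ∂μ = 0 :=
    coreP3_eq (hNmeas i0) (hΦmeas i0) (hNΦ i0) hvne hwne (hNlaw i0) (hΦlaw i0) (α-1) α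
  -- independences
  have hindAA : ∀ i j : Fin n, i ≠ j →
      IndepFun (fun ω => N i ω + Φ i ω) (fun ω => N j ω + Φ j ω) μ := by
    intro i j hij
    exact (hpair i j hij).comp (measurable_fst.add measurable_snd)
      (measurable_fst.add measurable_snd)
  have hindAD : ∀ j : Fin n, j ≠ i0 →
      IndepFun (fun ω => N j ω + Φ j ω)
        (fun ω => ((α - 1) * N i0 ω + α * Φ i0 ω) ^ 2) μ := by
    intro j hj
    exact (hpair j i0 hj).comp (measurable_fst.add measurable_snd)
      (((measurable_fst.const_mul (α-1)).add (measurable_snd.const_mul α)).pow_const 2)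
  have hindA2D : ∀ i : Fin n, i ≠ i0 →
      IndepFun (fun ω => (N i ω + Φ i ω) * (N i ω + Φ i ω))
        (fun ω => ((α - 1) * N i0 ω + α * Φ i0 ω) ^ 2) μ := by
    intro i hi
    exact (hpair i i0 hi).comp
      ((measurable_fst.add measurable_snd).mul (measurable_fst.add measurable_snd))
      (((measurable_fst.const_mul (α-1)).add (measurable_snd.const_mul α)).pow_const 2)
  have hindA0DA : ∀ j : Fin n, j ≠ i0 →
      IndepFun (fun ω => (N i0 ω + Φ i0 ω) * ((α - 1) * N i0 ω + α * Φ i0 ω) ^ 2)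
        (fun ω => N j ω + Φ j ω) μ := by
    intro j hj
    exact (hpair i0 j (fun h => hj h.symm)).comp
      ((measurable_fst.add measurable_snd).mul
        (((measurable_fst.const_mul (α-1)).add (measurable_snd.const_mul α)).pow_const 2))
      (measurable_fst.add measurable_snd)
  have hind5 : ∀ i j : Fin n, i ≠ j → i ≠ i0 → j ≠ i0 →
      IndepFun (fun ω => N i ω + Φ i ω)
        (fun ω => (N j ω + Φ j ω) * ((α - 1) * N i0 ω + α * Φ i0 ω) ^ 2) μ := by
    intro i j hij hii0 hji0
    have hST : Disjoint ({Sum.inl i, Sum.inr i} : Finset (Fin n ⊕ Fin n))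
        ({Sum.inl j, Sum.inr j, Sum.inl i0, Sum.inr i0} : Finset (Fin n ⊕ Fin n)) := by
      simp [Finset.disjoint_left, hij, hii0]
    have hbase := hindep.indepFun_finset _ _ hST hfm
    have hF : Measurable (fun u : (∀ _x : ({Sum.inl i, Sum.inr i} :
        Finset (Fin n ⊕ Fin n)), ℝ) =>
        u ⟨Sum.inl i, by simp⟩ + u ⟨Sum.inr i, by simp⟩) := by fun_prop
    have hG : Measurable (fun u : (∀ _x : ({Sum.inl j, Sum.inr j, Sum.inl i0, Sum.inr i0} :
        Finset (Fin n ⊕ Fin n)), ℝ) =>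
        (u ⟨Sum.inl j, by simp⟩ + u ⟨Sum.inr j, by simp⟩) *
          ((α - 1) * u ⟨Sum.inl i0, by simp⟩ + α * u ⟨Sum.inr i0, by simp⟩) ^ 2) := by fun_prop
    exact hbase.comp hF hG
  -- integrability of pairwise products
  have hAA_int : ∀ i j : Fin n,
      Integrable (fun ω => (N i ω + Φ i ω) * (N j ω + Φ j ω)) μ := by
    intro i j
    by_cases hij : i = j
    · subst hij
      exact coreS2_int (hNmeas i) (hΦmeas i) (hNΦ i) hvne hwne (hNlaw i) (hΦlaw i)
    · exact (hindAA i j hij).integrable_mul (hIntA i) (hIntA j)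
  -- the per-term integrability
  have hterm_int : ∀ i j : Fin n, Integrable
      (fun ω => (N i ω + Φ i ω) * (N j ω + Φ j ω) *
        ((α - 1) * N i0 ω + α * Φ i0 ω) ^ 2) μ := by
    intro i j
    by_cases hi : i = i0 <;> by_cases hj : j = i0
    · rw [hi, hj]
      exact coreP4_int (hNmeas i0) (hΦmeas i0) (hNΦ i0) hvne hwne (hNlaw i0) (hΦlaw i0)
        (α-1) α
    · rw [hi]
      have e : (fun ω => (N i0 ω + Φ i0 ω) * (N j ω + Φ j ω) *
          ((α - 1) * N i0 ω + α * Φ i0 ω) ^ 2)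
          = fun ω => ((N i0 ω + Φ i0 ω) * ((α - 1) * N i0 ω + α * Φ i0 ω) ^ 2) *
            (N j ω + Φ j ω) := funext fun ω => by ring
      rw [e]
      exact (hindA0DA j hj).integrable_mul hIntA0D (hIntA j)
    · rw [hj]
      have e : (fun ω => (N i ω + Φ i ω) * (N i0 ω + Φ i0 ω) *
          ((α - 1) * N i0 ω + α * Φ i0 ω) ^ 2)
          = fun ω => ((N i0 ω + Φ i0 ω) * ((α - 1) * N i0 ω + α * Φ i0 ω) ^ 2) *
            (N i ω + Φ i ω) := funext fun ω => by ring
      rw [e]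
      exact (hindA0DA i hi).integrable_mul hIntA0D (hIntA i)
    · by_cases hij : i = j
      · subst hij
        exact (hindA2D i hi).integrable_mul
          (coreS2_int (hNmeas i) (hΦmeas i) (hNΦ i) hvne hwne (hNlaw i) (hΦlaw i)) hIntD
      · have e : (fun ω => (N i ω + Φ i ω) * (N j ω + Φ j ω) *
            ((α - 1) * N i0 ω + α * Φ i0 ω) ^ 2)
            = fun ω => (N i ω + Φ i ω) *
              ((N j ω + Φ j ω) * ((α - 1) * N i0 ω + α * Φ i0 ω) ^ 2) :=
          funext fun ω => by ring
        rw [e]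
        exact (hind5 i j hij hi hj).integrable_mul (hIntA i)
          ((hindAD j hj).integrable_mul (hIntA j) hIntD)
  -- the per-term identity
  have hterm : ∀ i j : Fin n,
      ∫ ω, (N i ω + Φ i ω) * (N j ω + Φ j ω) *
        ((α - 1) * N i0 ω + α * Φ i0 ω) ^ 2 ∂μ
      = (∫ ω, (N i ω + Φ i ω) * (N j ω + Φ j ω) ∂μ) *
        ∫ ω, ((α - 1) * N i0 ω + α * Φ i0 ω) ^ 2 ∂μ := by
    intro i j
    by_cases hi : i = i0 <;> by_cases hj : j = i0
    · rw [hi, hj]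
      exact coreP4_eq' (hNmeas i0) (hΦmeas i0) (hNΦ i0) hvne hwne (hNlaw i0) (hΦlaw i0)
        (α-1) α hab
    · rw [hi]
      have e : (fun ω => (N i0 ω + Φ i0 ω) * (N j ω + Φ j ω) *
          ((α - 1) * N i0 ω + α * Φ i0 ω) ^ 2)
          = fun ω => ((N i0 ω + Φ i0 ω) * ((α - 1) * N i0 ω + α * Φ i0 ω) ^ 2) *
            (N j ω + Φ j ω) := funext fun ω => by ring
      have h1 : ∫ ω, ((N i0 ω + Φ i0 ω) * ((α - 1) * N i0 ω + α * Φ i0 ω) ^ 2) *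
          (N j ω + Φ j ω) ∂μ
          = (∫ ω, (N i0 ω + Φ i0 ω) * ((α - 1) * N i0 ω + α * Φ i0 ω) ^ 2 ∂μ) *
            ∫ ω, (N j ω + Φ j ω) ∂μ :=
        (hindA0DA j hj).integral_fun_mul_eq_mul_integral hIntA0D.aestronglyMeasurable (hIntA j).aestronglyMeasurable
      have h2 : ∫ ω, (N i0 ω + Φ i0 ω) * (N j ω + Φ j ω) ∂μ
          = (∫ ω, (N i0 ω + Φ i0 ω) ∂μ) * ∫ ω, (N j ω + Φ j ω) ∂μ :=
        (hindAA i0 j (fun h => hj h.symm)).integral_fun_mul_eq_mul_integral (hIntA i0).aestronglyMeasurable (hIntA j).aestronglyMeasurable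
      rw [e, h1, hEA0D, zero_mul, h2, hEA j, mul_zero, zero_mul]
    · rw [hj]
      have e : (fun ω => (N i ω + Φ i ω) * (N i0 ω + Φ i0 ω) *
          ((α - 1) * N i0 ω + α * Φ i0 ω) ^ 2)
          = fun ω => ((N i0 ω + Φ i0 ω) * ((α - 1) * N i0 ω + α * Φ i0 ω) ^ 2) *
            (N i ω + Φ i ω) := funext fun ω => by ring
      have h1 : ∫ ω, ((N i0 ω + Φ i0 ω) * ((α - 1) * N i0 ω + α * Φ i0 ω) ^ 2) *
          (N i ω + Φ i ω) ∂μ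
          = (∫ ω, (N i0 ω + Φ i0 ω) * ((α - 1) * N i0 ω + α * Φ i0 ω) ^ 2 ∂μ) *
            ∫ ω, (N i ω + Φ i ω) ∂μ :=
        (hindA0DA i hi).integral_fun_mul_eq_mul_integral hIntA0D.aestronglyMeasurable (hIntA i).aestronglyMeasurable
      have h2 : ∫ ω, (N i ω + Φ i ω) * (N i0 ω + Φ i0 ω) ∂μ
          = (∫ ω, (N i ω + Φ i ω) ∂μ) * ∫ ω, (N i0 ω + Φ i0 ω) ∂μ :=
        (hindAA i i0 hi).integral_fun_mul_eq_mul_integral (hIntA i).aestronglyMeasurable (hIntA i0).aestronglyMeasurable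
      rw [e, h1, hEA0D, zero_mul, h2, hEA i, zero_mul, zero_mul]
    · by_cases hij : i = j
      · subst hij
        exact (hindA2D i hi).integral_fun_mul_eq_mul_integral
          (coreS2_int (hNmeas i) (hΦmeas i) (hNΦ i) hvne hwne (hNlaw i) (hΦlaw i)).aestronglyMeasurable hIntD.aestronglyMeasurable
      · have e : (fun ω => (N i ω + Φ i ω) * (N j ω + Φ j ω) *
            ((α - 1) * N i0 ω + α * Φ i0 ω) ^ 2)
            = fun ω => (N i ω + Φ i ω) *
              ((N j ω + Φ j ω) * ((α - 1) * N i0 ω + α * Φ i0 ω) ^ 2) :=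
          funext fun ω => by ring
        have h1 : ∫ ω, (N i ω + Φ i ω) *
            ((N j ω + Φ j ω) * ((α - 1) * N i0 ω + α * Φ i0 ω) ^ 2) ∂μ
            = (∫ ω, (N i ω + Φ i ω) ∂μ) *
              ∫ ω, (N j ω + Φ j ω) * ((α - 1) * N i0 ω + α * Φ i0 ω) ^ 2 ∂μ :=
          (hind5 i j hij hi hj).integral_fun_mul_eq_mul_integral (hIntA i).aestronglyMeasurable
            ((hindAD j hj).integrable_mul (hIntA j) hIntD).aestronglyMeasurable
        have h2 : ∫ ω, (N i ω + Φ i ω) * (N j ω + Φ j ω) ∂μ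
            = (∫ ω, (N i ω + Φ i ω) ∂μ) * ∫ ω, (N j ω + Φ j ω) ∂μ :=
          (hindAA i j hij).integral_fun_mul_eq_mul_integral (hIntA i).aestronglyMeasurable (hIntA j).aestronglyMeasurable
        rw [e, h1, hEA i, zero_mul, h2, hEA i, zero_mul, zero_mul]
  -- expansion of the square
  have hSq : (fun ω => (∑ i, c i * (N i ω + Φ i ω)) ^ 2 *
      ((α - 1) * N i0 ω + α * Φ i0 ω) ^ 2)
      = fun ω => ∑ i, ∑ j, (c i * c j) *
        ((N i ω + Φ i ω) * (N j ω + Φ j ω) * ((α - 1) * N i0 ω + α * Φ i0 ω) ^ 2) := by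
    funext ω
    rw [sq, Finset.sum_mul_sum, Finset.sum_mul]
    refine Finset.sum_congr rfl fun i _ => ?_
    rw [Finset.sum_mul]
    refine Finset.sum_congr rfl fun j _ => ?_
    ring
  have hSq2 : (fun ω => (∑ i, c i * (N i ω + Φ i ω)) ^ 2)
      = fun ω => ∑ i, ∑ j, (c i * c j) * ((N i ω + Φ i ω) * (N j ω + Φ j ω)) := by
    funext ω
    rw [sq, Finset.sum_mul_sum]
    refine Finset.sum_congr rfl fun i _ => ?_
    refine Finset.sum_congr rfl fun j _ => ?_
    ring
  calc ∫ ω, (∑ i, c i * (N i ω + Φ i ω)) ^ 2 *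
        ((α - 1) * N i0 ω + α * Φ i0 ω) ^ 2 ∂μ
      = ∑ i, ∑ j, (c i * c j) *
          ((∫ ω, (N i ω + Φ i ω) * (N j ω + Φ j ω) ∂μ) *
            ∫ ω, ((α - 1) * N i0 ω + α * Φ i0 ω) ^ 2 ∂μ) := by
        rw [hSq, integral_finset_sum _ (fun i _ =>
          integrable_finset_sum _ (fun j _ => (hterm_int i j).const_mul _))]
        refine Finset.sum_congr rfl fun i _ => ?_
        rw [integral_finset_sum _ (fun j _ => (hterm_int i j).const_mul _)]
        refine Finset.sum_congr rfl fun j _ => ?_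
        rw [integral_const_mul, hterm i j]
    _ = (∑ i, ∑ j, (c i * c j) *
          ∫ ω, (N i ω + Φ i ω) * (N j ω + Φ j ω) ∂μ) *
          ∫ ω, ((α - 1) * N i0 ω + α * Φ i0 ω) ^ 2 ∂μ := by
        rw [Finset.sum_mul]
        refine Finset.sum_congr rfl fun i _ => ?_
        rw [Finset.sum_mul]
        refine Finset.sum_congr rfl fun j _ => ?_
        ring
    _ = (∫ ω, (∑ i, c i * (N i ω + Φ i ω)) ^ 2 ∂μ) *
          ∫ ω, ((α - 1) * N i0 ω + α * Φ i0 ω) ^ 2 ∂μ := by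
        congr 1
        rw [hSq2, integral_finset_sum _ (fun i _ =>
          integrable_finset_sum _ (fun j _ => (hAA_int i j).const_mul _))]
        refine Finset.sum_congr rfl fun i _ => ?_
        rw [integral_finset_sum _ (fun j _ => (hAA_int i j).const_mul _)]
        refine Finset.sum_congr rfl fun j _ => ?_
        rw [integral_const_mul]
end

section
/- Fix 1 ≤ k ≤ n and a design matrix Y* ∈ ℝ^{k×n} with Y*(Y*)ᵀ invertible. Let N, Φ ∈ ℝⁿ be independent random vectors with i.i.d. N(0, σ²) and i.i.d. N(0, σ_Φ²) entries respectively, set α = σ²/(σ² + σ_Φ²), and let β̂ be the OLS estimator on the coded data, so that β̂ − β = (Y*(Y*)ᵀ)⁻¹ Y* (N + Φ). Let Σ̃ be any k×k symmetric positive semidefinite matrix, and define the generalization error G = σ² + (β̂ − β)ᵀ Σ̃ (β̂ − β) and the distortion of the first sample D₁ = ((α − 1)N_1 + αΦ_1)². Then Cov(G, D₁) = 0, i.e., E[G · D₁] = E[G] · E[D₁]. -/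
open MeasureTheory ProbabilityTheory Matrix Real Set
open scoped ENNReal NNReal

lemma aux_pdf_eq (w : ℝ≥0) :
    gaussianPDFReal 0 w = fun x => (√(2 * π * w))⁻¹ * rexp (-(2 * (w:ℝ))⁻¹ * x ^ 2) := by
  ext x
  simp only [gaussianPDFReal, sub_zero]
  congr 1
  rw [div_eq_mul_inv, neg_mul, mul_comm]
  ring_nf

lemma aux_integral_gaussianReal (w : ℝ≥0) (hw : w ≠ 0) (f : ℝ → ℝ) :
    ∫ x, f x ∂(gaussianReal 0 w) = ∫ x, gaussianPDFReal 0 w x * f x := by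
  rw [gaussianReal_of_var_ne_zero _ hw]
  rw [show gaussianPDF 0 w = fun x => (((gaussianPDFReal 0 w x).toNNReal : ℝ≥0) : ℝ≥0∞) from rfl]
  rw [integral_withDensity_eq_integral_smul
    ((measurable_gaussianPDFReal 0 w).real_toNNReal) f]
  congr 1
  ext x
  rw [NNReal.smul_def, smul_eq_mul, Real.coe_toNNReal _ (gaussianPDFReal_nonneg 0 w x)]

lemma aux_integrable_pow_gaussianReal (w : ℝ≥0) (hw : w ≠ 0) (m : ℕ) :
    Integrable (fun x : ℝ => x ^ m) (gaussianReal 0 w) := by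
  rw [gaussianReal_of_var_ne_zero _ hw,
    show gaussianPDF 0 w = fun x => (((gaussianPDFReal 0 w x).toNNReal : ℝ≥0) : ℝ≥0∞) from rfl,
    integrable_withDensity_iff_integrable_smul ((measurable_gaussianPDFReal 0 w).real_toNNReal)]
  have hw' : (0:ℝ) < (w:ℝ) := by positivity
  have hb : (0:ℝ) < (2 * (w:ℝ))⁻¹ := by positivity
  have hm : (-1:ℝ) < (m:ℝ) := lt_of_lt_of_le (by norm_num) (Nat.cast_nonneg m)
  have h := (integrable_rpow_mul_exp_neg_mul_sq hb hm).const_mul ((√(2 * π * w))⁻¹)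
  refine h.congr (Filter.Eventually.of_forall fun x => ?_)
  show _ = (gaussianPDFReal 0 w x).toNNReal • x ^ m
  rw [NNReal.smul_def, Real.coe_toNNReal _ (gaussianPDFReal_nonneg 0 w x), smul_eq_mul,
    aux_pdf_eq]
  simp only [Real.rpow_natCast]
  ring

lemma aux_integral_pow_gaussianReal_odd (w : ℝ≥0) (hw : w ≠ 0) (m : ℕ) (hm : Odd m) :
    ∫ x, x ^ m ∂(gaussianReal 0 w) = 0 := by
  rw [aux_integral_gaussianReal w hw]
  have key : ∫ x, gaussianPDFReal 0 w x * x ^ m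
      = - ∫ x, gaussianPDFReal 0 w x * x ^ m := by
    conv_lhs => rw [← integral_neg_eq_self (fun x => gaussianPDFReal 0 w x * x ^ m) volume]
    rw [← integral_neg]
    congr 1
    ext x
    rw [aux_pdf_eq]
    simp only [hm.neg_pow, neg_sq, mul_neg]
  linarith [key]

lemma aux_integral_pow_gaussianReal_even (w : ℝ≥0) (hw : w ≠ 0) (m : ℕ) (hm : Even m) :
    ∫ x, x ^ m ∂(gaussianReal 0 w)
      = (√(2 * π * w))⁻¹ *
        ((2*(w:ℝ))⁻¹ ^ (-((m:ℝ) + 1)/2) * Real.Gamma (((m:ℝ)+1)/2)) := by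
  have hw' : (0:ℝ) < (w:ℝ) := by positivity
  have hb : (0:ℝ) < (2 * (w:ℝ))⁻¹ := by positivity
  have hm' : (-1:ℝ) < (m:ℝ) := lt_of_lt_of_le (by norm_num) (Nat.cast_nonneg m)
  rw [aux_integral_gaussianReal w hw]
  calc ∫ x, gaussianPDFReal 0 w x * x ^ m
      = ∫ x, (√(2 * π * w))⁻¹ * ((fun y => y ^ m * rexp (-(2*(w:ℝ))⁻¹ * y ^ 2)) |x|) := by
        congr 1; ext x
        rw [aux_pdf_eq]
        simp only
        rw [hm.pow_abs, sq_abs]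
        ring
    _ = (√(2 * π * w))⁻¹ * (2 * ∫ x in Ioi (0:ℝ), x ^ m * rexp (-(2*(w:ℝ))⁻¹ * x ^ 2)) := by
        rw [integral_const_mul,
          integral_comp_abs (f := fun y => y ^ m * rexp (-(2*(w:ℝ))⁻¹ * y ^ 2))]
    _ = (√(2 * π * w))⁻¹ * (2 * ∫ x in Ioi (0:ℝ), x ^ (m:ℝ) * rexp (-(2*(w:ℝ))⁻¹ * x ^ (2:ℝ))) := by
        congr 1
        refine congrArg _ (setIntegral_congr_fun measurableSet_Ioi (fun x hx => ?_))
        rw [Real.rpow_natCast]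
        norm_num [Real.rpow_natCast x 2]
    _ = (√(2 * π * w))⁻¹ *
        ((2*(w:ℝ))⁻¹ ^ (-((m:ℝ) + 1)/2) * Real.Gamma (((m:ℝ)+1)/2)) := by
        rw [integral_rpow_mul_exp_neg_mul_rpow two_pos hm' hb]
        ring

lemma aux_gamma_32 : Real.Gamma (3/2) = √π / 2 := by
  rw [show (3/2:ℝ) = 1/2 + 1 by norm_num, Real.Gamma_add_one (by norm_num),
    Real.Gamma_one_half_eq]
  ring

lemma aux_gamma_52 : Real.Gamma (5/2) = 3/4 * √π := by
  rw [show (5/2:ℝ) = 3/2 + 1 by norm_num, Real.Gamma_add_one (by norm_num), aux_gamma_32]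
  ring

lemma aux_sqrt_2piw (w : ℝ≥0) : √(2 * π * w) = √π * √(2*(w:ℝ)) := by
  rw [show 2*π*(w:ℝ) = π * (2*(w:ℝ)) by ring, Real.sqrt_mul Real.pi_pos.le]

lemma aux_rpow_arith (t : ℝ) (ht : 0 < t) :
    (t⁻¹ ^ (-(3/2:ℝ)) = t * √t) ∧ (t⁻¹ ^ (-(5/2:ℝ)) = t^2 * √t) := by
  have h1 : t⁻¹ ^ (-(3/2:ℝ)) = t ^ (3/2:ℝ) := by
    rw [Real.inv_rpow ht.le, ← Real.rpow_neg ht.le, neg_neg]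
  have h2 : t⁻¹ ^ (-(5/2:ℝ)) = t ^ (5/2:ℝ) := by
    rw [Real.inv_rpow ht.le, ← Real.rpow_neg ht.le, neg_neg]
  have e1 : t ^ (1:ℝ) = t := Real.rpow_one t
  have e2 : t ^ (2:ℝ) = t^2 := by
    rw [show (2:ℝ) = ((2:ℕ):ℝ) by norm_num, Real.rpow_natCast]
  constructor
  · rw [h1, show (3/2:ℝ) = 1 + 1/2 by norm_num, Real.rpow_add ht, e1, ← Real.sqrt_eq_rpow]
  · rw [h2, show (5/2:ℝ) = 2 + 1/2 by norm_num, Real.rpow_add ht, e2, ← Real.sqrt_eq_rpow]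

lemma aux_integral_sq_gaussianReal (w : ℝ≥0) (hw : w ≠ 0) :
    ∫ x, x ^ 2 ∂(gaussianReal 0 w) = (w:ℝ) := by
  rw [aux_integral_pow_gaussianReal_even w hw 2 ⟨1, by norm_num⟩]
  have hw' : (0:ℝ) < (w:ℝ) := by positivity
  have ht : (0:ℝ) < 2*(w:ℝ) := by positivity
  rw [show (-(((2:ℕ):ℝ) + 1)/2) = -(3/2) by norm_num,
    show ((((2:ℕ):ℝ)+1)/2) = 3/2 by norm_num,
    aux_gamma_32, (aux_rpow_arith _ ht).1, aux_sqrt_2piw]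
  obtain ⟨t, htdef⟩ : ∃ t, 2*(w:ℝ) = t := ⟨_, rfl⟩
  have ht' : (0:ℝ) < t := htdef ▸ ht
  have h1 : √t * √t = t := Real.mul_self_sqrt ht'.le
  have hsq : √t ≠ 0 := by positivity
  have hsp : √π ≠ 0 := by positivity
  rw [htdef, show (w:ℝ) = t/2 by rw [← htdef]; ring]
  field_simp

lemma aux_integral_four_gaussianReal (w : ℝ≥0) (hw : w ≠ 0) :
    ∫ x, x ^ 4 ∂(gaussianReal 0 w) = 3 * (w:ℝ)^2 := by
  rw [aux_integral_pow_gaussianReal_even w hw 4 ⟨2, by norm_num⟩]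
  have hw' : (0:ℝ) < (w:ℝ) := by positivity
  have ht : (0:ℝ) < 2*(w:ℝ) := by positivity
  rw [show (-(((4:ℕ):ℝ) + 1)/2) = -(5/2) by norm_num,
    show ((((4:ℕ):ℝ)+1)/2) = 5/2 by norm_num,
    aux_gamma_52, (aux_rpow_arith _ ht).2, aux_sqrt_2piw]
  obtain ⟨t, htdef⟩ : ∃ t, 2*(w:ℝ) = t := ⟨_, rfl⟩
  have ht' : (0:ℝ) < t := htdef ▸ ht
  have h1 : √t * √t = t := Real.mul_self_sqrt ht'.le
  have hsq : √t ≠ 0 := by positivity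
  have hsp : √π ≠ 0 := by positivity
  rw [htdef, show (w:ℝ) = t/2 by rw [← htdef]; ring]
  field_simp
  nlinarith [h1]

lemma aux_indep_quad_pair {Ω ι : Type*} [MeasurableSpace Ω] {μ : Measure Ω}
    {f : ι → Ω → ℝ} (h_indep : iIndepFun f μ)
    (hf : ∀ i, Measurable (f i)) (i j p q r s : ι)
    (hir : i ≠ r) (his : i ≠ s) (hjr : j ≠ r) (hjs : j ≠ s)
    (hpr : p ≠ r) (hps : p ≠ s) (hqr : q ≠ r) (hqs : q ≠ s) :
    IndepFun (fun ω => (f i ω, f j ω, f p ω, f q ω)) (fun ω => (f r ω, f s ω)) μ := by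
  classical
  have hd : Disjoint ({i, j, p, q} : Finset ι) ({r, s} : Finset ι) := by
    simp only [Finset.disjoint_left, Finset.mem_insert, Finset.mem_singleton]
    rintro x (rfl | rfl | rfl | rfl) <;> push_neg <;>
      exact ⟨by assumption, by assumption⟩
  let g4 : (∀ _x : ({i, j, p, q} : Finset ι), ℝ) → ℝ × ℝ × ℝ × ℝ := fun v =>
    (v ⟨i, by simp⟩, v ⟨j, by simp⟩, v ⟨p, by simp⟩, v ⟨q, by simp⟩)
  let g2 : (∀ _x : ({r, s} : Finset ι), ℝ) → ℝ × ℝ := fun v => (v ⟨r, by simp⟩, v ⟨s, by simp⟩)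
  have hg4 : Measurable g4 := by fun_prop
  have hg2 : Measurable g2 := by fun_prop
  exact (h_indep.indepFun_finset {i, j, p, q} {r, s} hd hf).comp hg4 hg2

lemma aux_indep_pow {Ω : Type*} [MeasurableSpace Ω] {μ : Measure Ω}
    {X Y : Ω → ℝ} (hXY : IndepFun X Y μ) (i j : ℕ) :
    IndepFun (fun ω => X ω ^ i) (fun ω => Y ω ^ j) μ :=
  hXY.comp (measurable_id.pow_const i) (measurable_id.pow_const j)

lemma aux_monomial {Ω : Type*} [MeasurableSpace Ω] {μ : Measure Ω}
    {X Y : Ω → ℝ} (hXY : IndepFun X Y μ) (i j : ℕ)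
    (hXi : Integrable (fun ω => X ω ^ i) μ) (hYj : Integrable (fun ω => Y ω ^ j) μ) :
    Integrable (fun ω => X ω ^ i * Y ω ^ j) μ ∧
      ∫ ω, X ω ^ i * Y ω ^ j ∂μ = (∫ ω, X ω ^ i ∂μ) * ∫ ω, Y ω ^ j ∂μ :=
  ⟨(aux_indep_pow hXY i j).integrable_mul hXi hYj,
   (aux_indep_pow hXY i j).integral_fun_mul_eq_mul_integral hXi.1 hYj.1⟩

lemma aux_mom {Ω : Type*} [MeasurableSpace Ω] {μ : Measure Ω}
    (w : ℝ≥0) (hw : w ≠ 0) (X : Ω → ℝ) (hX : Measurable X)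
    (hlaw : μ.map X = gaussianReal 0 w) (m : ℕ)
    (hint : Integrable (fun x : ℝ => x ^ m) (gaussianReal 0 w)) :
    Integrable (fun ω => X ω ^ m) μ ∧
      ∫ ω, X ω ^ m ∂μ = ∫ x, x ^ m ∂(gaussianReal 0 w) := by
  have hmeas : AEStronglyMeasurable (fun x : ℝ => x ^ m) (μ.map X) :=
    (measurable_id.pow_const m).aestronglyMeasurable
  constructor
  · rw [← hlaw] at hint
    exact (integrable_map_measure hmeas hX.aemeasurable).mp hint
  · rw [← integral_map hX.aemeasurable hmeas, hlaw]

-- matrix quadratic form expansion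
lemma aux_quadform {k n : ℕ} (M : Matrix (Fin k) (Fin n) ℝ) (Sigt : Matrix (Fin k) (Fin k) ℝ)
    (s : Fin n → ℝ) :
    (M.mulVec s) ⬝ᵥ Sigt.mulVec (M.mulVec s)
      = ∑ a, ∑ b, (Mᵀ * Sigt * M) a b * (s a * s b) := by
  have h1 : (M.mulVec s) ⬝ᵥ Sigt.mulVec (M.mulVec s) = s ⬝ᵥ (Mᵀ * Sigt * M).mulVec s := by
    rw [← Matrix.mulVec_mulVec, ← Matrix.mulVec_mulVec, Matrix.dotProduct_mulVec s,
      Matrix.vecMul_transpose]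
  rw [h1]
  simp only [dotProduct, Matrix.mulVec, Finset.mul_sum]
  exact Finset.sum_congr rfl fun a _ => Finset.sum_congr rfl fun b _ => by ring


/-- Parametric case of the finite-length no-trade-off result: with
Gaussian noises `N_i ~ N(0,σ²)`, `Φ_i ~ N(0,σ_Φ²)` all mutually independent,
`α = σ²/(σ² + σ_Φ²)`, OLS error `β̂ − β = (Y*(Y*)ᵀ)⁻¹Y*(N + Φ)`, any symmetric PSD `Σ̃`,
generalization error `G = σ² + (β̂−β)ᵀΣ̃(β̂−β)` and first-sample distortion
`D₁ = ((α−1)N₁ + αΦ₁)²`, one has `Cov(G, D₁) = 0`, i.e. `E[G·D₁] = E[G]·E[D₁]`. -/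
theorem stmt16
    {Ω : Type*} [MeasurableSpace Ω] {μ : Measure Ω} [IsProbabilityMeasure μ]
    (k n : ℕ) (hk : 1 ≤ k) (hkn : k ≤ n)
    (Ystar : Matrix (Fin k) (Fin n) ℝ)
    (hinv : IsUnit (Ystar * Ystarᵀ).det)
    (v vΦ : ℝ≥0) (hv : 0 < v) (hvΦ : 0 < vΦ)
    (N Φ : Fin n → Ω → ℝ)
    (hNmeas : ∀ i, Measurable (N i)) (hΦmeas : ∀ i, Measurable (Φ i))
    (hNlaw : ∀ i, μ.map (N i) = gaussianReal 0 v)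
    (hΦlaw : ∀ i, μ.map (Φ i) = gaussianReal 0 vΦ)
    (hindep : iIndepFun (Sum.elim N Φ) μ)
    (α : ℝ) (hα : α = (v : ℝ) / ((v : ℝ) + (vΦ : ℝ)))
    (β : Fin k → ℝ) (betaHat : Ω → Fin k → ℝ)
    (hbetaHat : ∀ ω, betaHat ω - β
      = ((Ystar * Ystarᵀ)⁻¹ * Ystar).mulVec (fun i => N i ω + Φ i ω))
    (Sigt : Matrix (Fin k) (Fin k) ℝ) (hSymm : Sigt.IsSymm) (hPSD : Sigt.PosSemidef)
    (G : Ω → ℝ)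
    (hG : G = fun ω => (v : ℝ) + (betaHat ω - β) ⬝ᵥ Sigt.mulVec (betaHat ω - β))
    (hn : 0 < n) (i0 : Fin n) (hi0 : i0 = ⟨0, hn⟩)
    (D1 : Ω → ℝ) (hD1 : D1 = fun ω => ((α - 1) * N i0 ω + α * Φ i0 ω) ^ 2) :
    ∫ ω, G ω * D1 ω ∂μ = (∫ ω, G ω ∂μ) * ∫ ω, D1 ω ∂μ := by
  classical
  have hvne : v ≠ 0 := hv.ne'
  have hvΦne : vΦ ≠ 0 := hvΦ.ne'
  have hWmeas : ∀ j, Measurable (Sum.elim N Φ j) := by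
    rintro (i | i)
    exacts [hNmeas i, hΦmeas i]
  -- gaussian moment values
  have gv1 : ∫ x, x ^ 1 ∂(gaussianReal 0 v) = 0 :=
    aux_integral_pow_gaussianReal_odd v hvne 1 odd_one
  have gv3 : ∫ x, x ^ 3 ∂(gaussianReal 0 v) = 0 :=
    aux_integral_pow_gaussianReal_odd v hvne 3 ⟨1, by norm_num⟩
  have gw1 : ∫ x, x ^ 1 ∂(gaussianReal 0 vΦ) = 0 :=
    aux_integral_pow_gaussianReal_odd vΦ hvΦne 1 odd_one
  have gw3 : ∫ x, x ^ 3 ∂(gaussianReal 0 vΦ) = 0 :=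
    aux_integral_pow_gaussianReal_odd vΦ hvΦne 3 ⟨1, by norm_num⟩
  have momN := fun (i : Fin n) (m : ℕ) =>
    aux_mom v hvne (N i) (hNmeas i) (hNlaw i) m (aux_integrable_pow_gaussianReal v hvne m)
  have momΦ := fun (i : Fin n) (m : ℕ) =>
    aux_mom vΦ hvΦne (Φ i) (hΦmeas i) (hΦlaw i) m (aux_integrable_pow_gaussianReal vΦ hvΦne m)
  have EN1 : ∀ i, ∫ ω, N i ω ^ 1 ∂μ = 0 := fun i => (momN i 1).2.trans gv1
  have EN2 : ∀ i, ∫ ω, N i ω ^ 2 ∂μ = (v : ℝ) :=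
    fun i => (momN i 2).2.trans (aux_integral_sq_gaussianReal v hvne)
  have EN3 : ∫ ω, N i0 ω ^ 3 ∂μ = 0 := (momN i0 3).2.trans gv3
  have EN4 : ∫ ω, N i0 ω ^ 4 ∂μ = 3 * (v : ℝ) ^ 2 :=
    (momN i0 4).2.trans (aux_integral_four_gaussianReal v hvne)
  have EP1 : ∀ i, ∫ ω, Φ i ω ^ 1 ∂μ = 0 := fun i => (momΦ i 1).2.trans gw1
  have EP2 : ∀ i, ∫ ω, Φ i ω ^ 2 ∂μ = (vΦ : ℝ) :=
    fun i => (momΦ i 2).2.trans (aux_integral_sq_gaussianReal vΦ hvΦne)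
  have EP3 : ∫ ω, Φ i0 ω ^ 3 ∂μ = 0 := (momΦ i0 3).2.trans gw3
  have EP4 : ∫ ω, Φ i0 ω ^ 4 ∂μ = 3 * (vΦ : ℝ) ^ 2 :=
    (momΦ i0 4).2.trans (aux_integral_four_gaussianReal vΦ hvΦne)
  -- independence instances
  have indepNP : ∀ i : Fin n, IndepFun (N i) (Φ i) μ := fun i =>
    hindep.indepFun (show (Sum.inl i : Fin n ⊕ Fin n) ≠ Sum.inr i by simp)
  have indepPP : ∀ a b : Fin n, a ≠ b →
      IndepFun (fun ω => (N a ω, Φ a ω)) (fun ω => (N b ω, Φ b ω)) μ := fun a b hab =>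
    hindep.indepFun_prodMk_prodMk hWmeas (Sum.inl a) (Sum.inr a) (Sum.inl b) (Sum.inr b)
      (by simp [hab]) (by simp) (by simp) (by simp [hab])
  have indepQP : ∀ a b c : Fin n, a ≠ c → b ≠ c →
      IndepFun (fun ω => (N a ω, Φ a ω, N b ω, Φ b ω)) (fun ω => (N c ω, Φ c ω)) μ :=
    fun a b c hac hbc =>
    aux_indep_quad_pair hindep hWmeas (Sum.inl a) (Sum.inr a) (Sum.inl b) (Sum.inr b)
      (Sum.inl c) (Sum.inr c) (by simp [hac]) (by simp) (by simp) (by simp [hac])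
      (by simp [hbc]) (by simp) (by simp) (by simp [hbc])
  have NPmon := fun (i : Fin n) (p q : ℕ) =>
    aux_monomial (indepNP i) p q (momN i p).1 (momΦ i q).1
  -- algebra from hα
  have hzero : (α - 1) * (v : ℝ) + α * (vΦ : ℝ) = 0 := by
    have hs : (v : ℝ) + (vΦ : ℝ) ≠ 0 := by positivity
    rw [hα]
    field_simp
    ring
  -- abbreviations
  obtain ⟨T2, hT2⟩ : ∃ g : Ω → ℝ, g = fun ω => ((α - 1) * N i0 ω + α * Φ i0 ω) ^ 2 := ⟨_, rfl⟩
  obtain ⟨S, hS⟩ : ∃ S : Fin n → Ω → ℝ, S = fun i ω => N i ω + Φ i ω := ⟨_, rfl⟩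
  have hSω : ∀ i ω, S i ω = N i ω + Φ i ω := fun i ω => by rw [hS]
  have hT2ω : ∀ ω, T2 ω = ((α - 1) * N i0 ω + α * Φ i0 ω) ^ 2 := fun ω => by rw [hT2]
  have hD1T : D1 = T2 := hD1.trans hT2.symm
  -- T2 expansion
  have expT2 : T2 = fun ω => (α - 1) ^ 2 * (N i0 ω ^ 2)
      + (2 * (α - 1) * α) * (N i0 ω ^ 1 * Φ i0 ω ^ 1) + α ^ 2 * (Φ i0 ω ^ 2) := by
    rw [hT2]; funext ω; ring
  have intT2 : Integrable T2 μ := by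
    rw [expT2]
    exact (((momN i0 2).1.const_mul _).add ((NPmon i0 1 1).1.const_mul _)).add
      ((momΦ i0 2).1.const_mul _)
  have ET2 : ∫ ω, T2 ω ∂μ = (α - 1) ^ 2 * (v : ℝ) + α ^ 2 * (vΦ : ℝ) := by
    have e1 : Integrable (fun ω => (α - 1) ^ 2 * (N i0 ω ^ 2)) μ := (momN i0 2).1.const_mul _
    have e2 : Integrable (fun ω => (2 * (α - 1) * α) * (N i0 ω ^ 1 * Φ i0 ω ^ 1)) μ :=
      (NPmon i0 1 1).1.const_mul _
    have e3 : Integrable (fun ω => α ^ 2 * (Φ i0 ω ^ 2)) μ := (momΦ i0 2).1.const_mul _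
    have e12 : Integrable (fun ω => (α - 1) ^ 2 * (N i0 ω ^ 2)
        + (2 * (α - 1) * α) * (N i0 ω ^ 1 * Φ i0 ω ^ 1)) μ := e1.add e2
    rw [expT2, integral_add e12 e3, integral_add e1 e2,
      integral_const_mul, integral_const_mul, integral_const_mul,
      (NPmon i0 1 1).2, EN1 i0, EN2 i0, EP1 i0, EP2 i0]
    ring
  -- S basics
  have intN : ∀ b, Integrable (N b) μ := fun b => by simpa using (momN b 1).1
  have intP : ∀ b, Integrable (Φ b) μ := fun b => by simpa using (momΦ b 1).1
  have ENb : ∀ b, ∫ ω, N b ω ∂μ = 0 := fun b => by simpa using (momN b 1).2.trans gv1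
  have EPb : ∀ b, ∫ ω, Φ b ω ∂μ = 0 := fun b => by simpa using (momΦ b 1).2.trans gw1
  have intS : ∀ b, Integrable (S b) μ := fun b => by
    rw [hS]; exact (intN b).add (intP b)
  have ESb : ∀ b, ∫ ω, S b ω ∂μ = 0 := fun b => by
    simp only [hSω]
    rw [integral_add (intN b) (intP b), ENb b, EPb b, add_zero]
  have indepS : ∀ a b, a ≠ b → IndepFun (S a) (S b) μ := fun a b hab => by
    rw [hS]
    exact (indepPP a b hab).comp (measurable_fst.add measurable_snd)
      (measurable_fst.add measurable_snd)
  -- S i * S i expansion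
  have expSS : ∀ i : Fin n, (fun ω => S i ω * S i ω)
      = fun ω => N i ω ^ 2 + 2 * (N i ω ^ 1 * Φ i ω ^ 1) + Φ i ω ^ 2 := fun i => by
    funext ω; rw [hSω]; ring
  have intSS : ∀ a b, Integrable (fun ω => S a ω * S b ω) μ := by
    intro a b
    by_cases hab : a = b
    · subst hab
      rw [expSS a]
      exact ((momN a 2).1.add ((NPmon a 1 1).1.const_mul _)).add (momΦ a 2).1
    · exact (indepS a b hab).integrable_mul (intS a) (intS b)
  have ESS0 : ∫ ω, S i0 ω * S i0 ω ∂μ = (v : ℝ) + (vΦ : ℝ) := by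
    have s1 : Integrable (fun ω => N i0 ω ^ 2) μ := (momN i0 2).1
    have s2 : Integrable (fun ω => 2 * (N i0 ω ^ 1 * Φ i0 ω ^ 1)) μ :=
      (NPmon i0 1 1).1.const_mul _
    have s12 : Integrable (fun ω => N i0 ω ^ 2 + 2 * (N i0 ω ^ 1 * Φ i0 ω ^ 1)) μ := s1.add s2
    rw [expSS i0, integral_add s12 (momΦ i0 2).1, integral_add s1 s2, integral_const_mul,
      (NPmon i0 1 1).2, EN1 i0, EN2 i0, EP1 i0, EP2 i0]
    ring
  have ESSne : ∀ a b, a ≠ b → ∫ ω, S a ω * S b ω ∂μ = 0 := fun a b hab => by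
    have h := (indepS a b hab).integral_fun_mul_eq_mul_integral (intS a).1 (intS b).1
    simpa [ESb a, ESb b] using h
  -- F := S i0 * T2
  have expF : (fun ω => S i0 ω * T2 ω) = fun ω =>
      (α - 1) ^ 2 * (N i0 ω ^ 3) + (2 * (α - 1) * α + (α - 1) ^ 2) * (N i0 ω ^ 2 * Φ i0 ω ^ 1)
        + (α ^ 2 + 2 * (α - 1) * α) * (N i0 ω ^ 1 * Φ i0 ω ^ 2) + α ^ 2 * (Φ i0 ω ^ 3) := by
    funext ω; rw [hSω, hT2ω]; ring
  have intF : Integrable (fun ω => S i0 ω * T2 ω) μ := by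
    rw [expF]
    exact ((((momN i0 3).1.const_mul _).add ((NPmon i0 2 1).1.const_mul _)).add
      ((NPmon i0 1 2).1.const_mul _)).add ((momΦ i0 3).1.const_mul _)
  have EF : ∫ ω, S i0 ω * T2 ω ∂μ = 0 := by
    have f1 : Integrable (fun ω => (α - 1) ^ 2 * (N i0 ω ^ 3)) μ := (momN i0 3).1.const_mul _
    have f2 : Integrable (fun ω => (2 * (α - 1) * α + (α - 1) ^ 2)
        * (N i0 ω ^ 2 * Φ i0 ω ^ 1)) μ := (NPmon i0 2 1).1.const_mul _
    have f3 : Integrable (fun ω => (α ^ 2 + 2 * (α - 1) * α)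
        * (N i0 ω ^ 1 * Φ i0 ω ^ 2)) μ := (NPmon i0 1 2).1.const_mul _
    have f4 : Integrable (fun ω => α ^ 2 * (Φ i0 ω ^ 3)) μ := (momΦ i0 3).1.const_mul _
    have f12 : Integrable (fun ω => (α - 1) ^ 2 * (N i0 ω ^ 3)
        + (2 * (α - 1) * α + (α - 1) ^ 2) * (N i0 ω ^ 2 * Φ i0 ω ^ 1)) μ := f1.add f2
    have f123 : Integrable (fun ω => (α - 1) ^ 2 * (N i0 ω ^ 3)
        + (2 * (α - 1) * α + (α - 1) ^ 2) * (N i0 ω ^ 2 * Φ i0 ω ^ 1)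
        + (α ^ 2 + 2 * (α - 1) * α) * (N i0 ω ^ 1 * Φ i0 ω ^ 2)) μ := f12.add f3
    rw [expF, integral_add f123 f4, integral_add f12 f3, integral_add f1 f2,
      integral_const_mul, integral_const_mul, integral_const_mul, integral_const_mul,
      (NPmon i0 2 1).2, (NPmon i0 1 2).2, EN3, EP3, EN1 i0, EP1 i0]
    ring
  -- H := S i0 * S i0 * T2
  have expH : (fun ω => S i0 ω * S i0 ω * T2 ω) = fun ω =>
      (α - 1) ^ 2 * (N i0 ω ^ 4)
        + (2 * (α - 1) * α + 2 * (α - 1) ^ 2) * (N i0 ω ^ 3 * Φ i0 ω ^ 1)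
        + (α ^ 2 + 4 * (α - 1) * α + (α - 1) ^ 2) * (N i0 ω ^ 2 * Φ i0 ω ^ 2)
        + (2 * (α - 1) * α + 2 * α ^ 2) * (N i0 ω ^ 1 * Φ i0 ω ^ 3)
        + α ^ 2 * (Φ i0 ω ^ 4) := by
    funext ω; rw [hSω, hT2ω]; ring
  have intH : Integrable (fun ω => S i0 ω * S i0 ω * T2 ω) μ := by
    rw [expH]
    exact (((((momN i0 4).1.const_mul _).add ((NPmon i0 3 1).1.const_mul _)).add
      ((NPmon i0 2 2).1.const_mul _)).add ((NPmon i0 1 3).1.const_mul _)).add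
      ((momΦ i0 4).1.const_mul _)
  have EH : ∫ ω, S i0 ω * S i0 ω * T2 ω ∂μ
      = ((v : ℝ) + (vΦ : ℝ)) * ((α - 1) ^ 2 * (v : ℝ) + α ^ 2 * (vΦ : ℝ)) := by
    have h1 : Integrable (fun ω => (α - 1) ^ 2 * (N i0 ω ^ 4)) μ := (momN i0 4).1.const_mul _
    have h2 : Integrable (fun ω => (2 * (α - 1) * α + 2 * (α - 1) ^ 2)
        * (N i0 ω ^ 3 * Φ i0 ω ^ 1)) μ := (NPmon i0 3 1).1.const_mul _
    have h3 : Integrable (fun ω => (α ^ 2 + 4 * (α - 1) * α + (α - 1) ^ 2)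
        * (N i0 ω ^ 2 * Φ i0 ω ^ 2)) μ := (NPmon i0 2 2).1.const_mul _
    have h4 : Integrable (fun ω => (2 * (α - 1) * α + 2 * α ^ 2)
        * (N i0 ω ^ 1 * Φ i0 ω ^ 3)) μ := (NPmon i0 1 3).1.const_mul _
    have h5 : Integrable (fun ω => α ^ 2 * (Φ i0 ω ^ 4)) μ := (momΦ i0 4).1.const_mul _
    have h12 : Integrable (fun ω => (α - 1) ^ 2 * (N i0 ω ^ 4)
        + (2 * (α - 1) * α + 2 * (α - 1) ^ 2) * (N i0 ω ^ 3 * Φ i0 ω ^ 1)) μ := h1.add h2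
    have h123 : Integrable (fun ω => (α - 1) ^ 2 * (N i0 ω ^ 4)
        + (2 * (α - 1) * α + 2 * (α - 1) ^ 2) * (N i0 ω ^ 3 * Φ i0 ω ^ 1)
        + (α ^ 2 + 4 * (α - 1) * α + (α - 1) ^ 2) * (N i0 ω ^ 2 * Φ i0 ω ^ 2)) μ := h12.add h3
    have h1234 : Integrable (fun ω => (α - 1) ^ 2 * (N i0 ω ^ 4)
        + (2 * (α - 1) * α + 2 * (α - 1) ^ 2) * (N i0 ω ^ 3 * Φ i0 ω ^ 1)
        + (α ^ 2 + 4 * (α - 1) * α + (α - 1) ^ 2) * (N i0 ω ^ 2 * Φ i0 ω ^ 2)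
        + (2 * (α - 1) * α + 2 * α ^ 2) * (N i0 ω ^ 1 * Φ i0 ω ^ 3)) μ := h123.add h4
    rw [expH, integral_add h1234 h5, integral_add h123 h4, integral_add h12 h3,
      integral_add h1 h2,
      integral_const_mul, integral_const_mul, integral_const_mul, integral_const_mul,
      integral_const_mul,
      (NPmon i0 3 1).2, (NPmon i0 2 2).2, (NPmon i0 1 3).2,
      EN1 i0, EN2 i0, EN3, EN4, EP1 i0, EP2 i0, EP3, EP4]
    linear_combination (2 * ((α - 1) * (v : ℝ) + α * (vΦ : ℝ))) * hzero
  -- the key per-term factorization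
  have key : ∀ a b, Integrable (fun ω => S a ω * S b ω * T2 ω) μ ∧
      ∫ ω, S a ω * S b ω * T2 ω ∂μ = (∫ ω, S a ω * S b ω ∂μ) * ∫ ω, T2 ω ∂μ := by
    intro a b
    by_cases ha : a = i0 <;> by_cases hb : b = i0
    · rw [ha, hb]
      exact ⟨intH, by rw [EH, ESS0, ET2]⟩
    · rw [ha]
      have hind : IndepFun (fun ω => S i0 ω * T2 ω) (S b) μ := by
        rw [hS, hT2]
        exact (indepPP i0 b (Ne.symm hb)).comp
          ((measurable_fst.add measurable_snd).mul
            (((measurable_fst.const_mul _).add (measurable_snd.const_mul _)).pow_const 2))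
          (measurable_fst.add measurable_snd)
      have heq : (fun ω => S i0 ω * S b ω * T2 ω) = fun ω => (S i0 ω * T2 ω) * S b ω := by
        funext ω; ring
      constructor
      · rw [heq]; exact hind.integrable_mul intF (intS b)
      · rw [heq]
        have h : ∫ ω, (S i0 ω * T2 ω) * S b ω ∂μ
            = (∫ ω, S i0 ω * T2 ω ∂μ) * ∫ ω, S b ω ∂μ :=
          hind.integral_fun_mul_eq_mul_integral intF.1 (intS b).1
        rw [h, EF, ESSne i0 b (Ne.symm hb), zero_mul, zero_mul]
    · rw [hb]
      have hind : IndepFun (fun ω => S i0 ω * T2 ω) (S a) μ := by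
        rw [hS, hT2]
        exact (indepPP i0 a (Ne.symm ha)).comp
          ((measurable_fst.add measurable_snd).mul
            (((measurable_fst.const_mul _).add (measurable_snd.const_mul _)).pow_const 2))
          (measurable_fst.add measurable_snd)
      have heq : (fun ω => S a ω * S i0 ω * T2 ω) = fun ω => (S i0 ω * T2 ω) * S a ω := by
        funext ω; ring
      constructor
      · rw [heq]; exact hind.integrable_mul intF (intS a)
      · rw [heq]
        have h : ∫ ω, (S i0 ω * T2 ω) * S a ω ∂μ
            = (∫ ω, S i0 ω * T2 ω ∂μ) * ∫ ω, S a ω ∂μ :=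
          hind.integral_fun_mul_eq_mul_integral intF.1 (intS a).1
        rw [h, EF, ESSne a i0 ha, zero_mul, zero_mul]
    · have hind : IndepFun (fun ω => S a ω * S b ω) T2 μ := by
        rw [hS, hT2]
        exact (indepQP a b i0 ha hb).comp
          (by fun_prop : Measurable fun p : ℝ × ℝ × ℝ × ℝ => (p.1 + p.2.1) * (p.2.2.1 + p.2.2.2))
          (by fun_prop : Measurable fun p : ℝ × ℝ => ((α - 1) * p.1 + α * p.2) ^ 2)
      exact ⟨hind.integrable_mul (intSS a b) intT2,
        hind.integral_fun_mul_eq_mul_integral (intSS a b).1 intT2.1⟩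
  -- expansion of G
  obtain ⟨AA, hAA⟩ : ∃ A : Matrix (Fin n) (Fin n) ℝ,
      A = ((Ystar * Ystarᵀ)⁻¹ * Ystar)ᵀ * Sigt * ((Ystar * Ystarᵀ)⁻¹ * Ystar) := ⟨_, rfl⟩
  have hGexp : G = fun ω => (v : ℝ) + ∑ a, ∑ b, AA a b * (S a ω * S b ω) := by
    rw [hG]
    funext ω
    rw [hbetaHat ω, aux_quadform, hAA]
    simp only [hSω]
  have hGω : ∀ ω, G ω = (v : ℝ) + ∑ a, ∑ b, AA a b * (S a ω * S b ω) := fun ω => by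
    rw [hGexp]
  have hD1ω : ∀ ω, D1 ω = T2 ω := fun ω => by rw [hD1T]
  -- integrable sums
  have intQF : Integrable (fun ω => ∑ a, ∑ b, AA a b * (S a ω * S b ω)) μ :=
    integrable_finset_sum _ fun a _ =>
      integrable_finset_sum _ fun b _ => (intSS a b).const_mul _
  have intBig : Integrable (fun ω => ∑ a, ∑ b, AA a b * (S a ω * S b ω * T2 ω)) μ :=
    integrable_finset_sum _ fun a _ =>
      integrable_finset_sum _ fun b _ => (key a b).1.const_mul _
  -- E[G]
  have EG : ∫ ω, G ω ∂μ = (v : ℝ) + ∑ a, ∑ b, AA a b * ∫ ω, S a ω * S b ω ∂μ := by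
    rw [hGexp, integral_add (integrable_const _) intQF, integral_const]
    simp only [probReal_univ, one_smul]
    congr 1
    erw [integral_finset_sum _ fun a _ =>
      integrable_finset_sum _ fun b _ => (intSS a b).const_mul _]
    refine Finset.sum_congr rfl fun a _ => ?_
    erw [integral_finset_sum _ fun b _ => (intSS a b).const_mul _]
    exact Finset.sum_congr rfl fun b _ => integral_const_mul _ _
  -- E[G * D1]
  have hprod : (fun ω => G ω * D1 ω)
      = fun ω => (v : ℝ) * T2 ω + ∑ a, ∑ b, AA a b * (S a ω * S b ω * T2 ω) := by
    funext ω
    rw [hGω ω, hD1ω ω, add_mul, Finset.sum_mul]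
    congr 1
    refine Finset.sum_congr rfl fun a _ => ?_
    rw [Finset.sum_mul]
    exact Finset.sum_congr rfl fun b _ => by ring
  have EGD : ∫ ω, G ω * D1 ω ∂μ
      = (v : ℝ) * (∫ ω, T2 ω ∂μ)
        + ∑ a, ∑ b, AA a b * ((∫ ω, S a ω * S b ω ∂μ) * ∫ ω, T2 ω ∂μ) := by
    rw [hprod, integral_add (intT2.const_mul _) intBig, integral_const_mul]
    congr 1
    erw [integral_finset_sum _ fun a _ =>
      integrable_finset_sum _ fun b _ => (key a b).1.const_mul _]
    refine Finset.sum_congr rfl fun a _ => ?_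
    erw [integral_finset_sum _ fun b _ => (key a b).1.const_mul _]
    refine Finset.sum_congr rfl fun b _ => ?_
    rw [integral_const_mul, (key a b).2]
  -- conclusion
  have hD1int : ∫ ω, D1 ω ∂μ = ∫ ω, T2 ω ∂μ := by rw [hD1T]
  rw [EGD, EG, hD1int, add_mul, Finset.sum_mul]
  congr 1
  refine Finset.sum_congr rfl fun a _ => ?_
  rw [Finset.sum_mul]
  exact Finset.sum_congr rfl fun b _ => by ring
end

section
/- Let Y_1, …, Y_n be i.i.d. with a density p supported on a compact interval, and let N_1, …, N_n ~ N(0, σ²) and Φ_1, …, Φ_n ~ N(0, σ_Φ²) be i.i.d., all three families mutually independent. Set α = σ²/(σ² + σ_Φ²) and V_i = f(Y_i) + N_i + Φ_i for a bounded measurable f. Let K be a strictly positive kernel, h > 0, and let f̂(y) = (Σ_i K((y − Y_i)/h) V_i)/(Σ_i K((y − Y_i)/h)) be the Nadaraya–Watson estimator. Define the generalization error G = σ² + ∫ (f̂(y) − f(y))² p(y) dy and the distortion of the first sample D₁ = ((α − 1)N_1 + αΦ_1)². Then, provided the moments exist, Cov(G, D₁) = 0. -/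
open MeasureTheory ProbabilityTheory Filter
open scoped ENNReal NNReal Topology

open Real in
lemma stmt17_pdf_factor (v w : ℝ≥0) (hv : v ≠ 0) (hw : w ≠ 0) (u x : ℝ) :
    gaussianPDFReal 0 v x * gaussianPDFReal 0 w (u - x)
      = gaussianPDFReal 0 (v + w) u
        * gaussianPDFReal 0 (v * w / (v + w)) ((v : ℝ) / ((v : ℝ) + (w : ℝ)) * u - x) := by
  have hv' : (0:ℝ) < v := lt_of_le_of_ne v.coe_nonneg (by exact_mod_cast (Ne.symm hv))
  have hw' : (0:ℝ) < w := lt_of_le_of_ne w.coe_nonneg (by exact_mod_cast (Ne.symm hw))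
  have hvw : (0:ℝ) < (v:ℝ) + w := by linarith
  have hcast : ((v * w / (v + w) : ℝ≥0) : ℝ) = (v:ℝ) * w / ((v:ℝ) + w) := by push_cast; ring
  have hπ : (0:ℝ) < 2 * π := by positivity
  simp only [gaussianPDFReal, sub_zero, hcast, NNReal.coe_add]
  have hsqrt : √(2 * π * v) * √(2 * π * w)
      = √(2 * π * ((v:ℝ) + w)) * √(2 * π * ((v:ℝ) * w / ((v:ℝ) + w))) := by
    rw [← Real.sqrt_mul (by positivity), ← Real.sqrt_mul (by positivity)]
    congr 1
    field_simp
  have hexp : (- x ^ 2 / (2 * v)) + (- (u - x) ^ 2 / (2 * w))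
      = (- u ^ 2 / (2 * ((v:ℝ) + w)))
        + (- ((v:ℝ) / ((v:ℝ) + w) * u - x) ^ 2 / (2 * ((v:ℝ) * w / ((v:ℝ) + w)))) := by
    field_simp
    ring
  calc (√(2 * π * v))⁻¹ * rexp (- x ^ 2 / (2 * v))
        * ((√(2 * π * w))⁻¹ * rexp (- (u - x) ^ 2 / (2 * w)))
      = (√(2 * π * v) * √(2 * π * w))⁻¹
        * rexp ((- x ^ 2 / (2 * v)) + (- (u - x) ^ 2 / (2 * w))) := by
        rw [mul_inv, Real.exp_add]; ring
    _ = (√(2 * π * ((v:ℝ) + w)) * √(2 * π * ((v:ℝ) * w / ((v:ℝ) + w))))⁻¹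
        * rexp ((- u ^ 2 / (2 * ((v:ℝ) + w)))
          + (- ((v:ℝ) / ((v:ℝ) + w) * u - x) ^ 2 / (2 * ((v:ℝ) * w / ((v:ℝ) + w))))) := by
        rw [hsqrt, hexp]
    _ = _ := by rw [mul_inv, Real.exp_add]; ring

open Real in
lemma stmt17_gaussPDF_factor (v w : ℝ≥0) (hv : v ≠ 0) (hw : w ≠ 0) (u x : ℝ) :
    gaussianPDF 0 v x * gaussianPDF 0 w (u - x)
      = gaussianPDF 0 (v + w) u
        * gaussianPDF 0 (v * w / (v + w)) ((v : ℝ) / ((v : ℝ) + (w : ℝ)) * u - x) := by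
  simp only [gaussianPDF]
  rw [← ENNReal.ofReal_mul (gaussianPDFReal_nonneg _ _ _),
    ← ENNReal.ofReal_mul (gaussianPDFReal_nonneg _ _ _),
    stmt17_pdf_factor v w hv hw u x]

lemma stmt17_core (v w : ℝ≥0) (hv : v ≠ 0) (hw : w ≠ 0) (α : ℝ)
    (hα : α = (v : ℝ) / ((v : ℝ) + (w : ℝ))) :
    ((gaussianReal 0 v).prod (gaussianReal 0 w)).map
        (fun z : ℝ × ℝ => (z.1 + z.2, (α - 1) * z.1 + α * z.2))
      = (gaussianReal 0 (v + w)).prod (gaussianReal 0 (v * w / (v + w))) := by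
  have hvw : v + w ≠ 0 := by positivity
  have hvw' : v * w / (v + w) ≠ 0 := by positivity
  set L : ℝ × ℝ → ℝ × ℝ := fun z => (z.1 + z.2, (α - 1) * z.1 + α * z.2) with hLdef
  have hL : Measurable L := by fun_prop
  -- density notation
  set φv := gaussianPDF 0 v
  set φw := gaussianPDF 0 w
  set φs := gaussianPDF 0 (v + w)
  set φq := gaussianPDF 0 (v * w / (v + w))
  have hφv : Measurable φv := measurable_gaussianPDF _ _
  have hφw : Measurable φw := measurable_gaussianPDF _ _
  have hφs : Measurable φs := measurable_gaussianPDF _ _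
  have hφq : Measurable φq := measurable_gaussianPDF _ _
  have hφtop : ∀ (m : ℝ≥0) (x : ℝ), gaussianPDF 0 m x ≠ ∞ := fun m x => ENNReal.ofReal_ne_top
  symm
  apply Measure.prod_eq
  intro A B hA hB
  rw [Measure.map_apply hL ((hA.prod hB))]
  rw [Measure.prod_apply (hL (hA.prod hB))]
  -- inner slice computation
  have slice : ∀ x : ℝ, (gaussianReal 0 w) (Prod.mk x ⁻¹' (L ⁻¹' A ×ˢ B))
      = ∫⁻ u, A.indicator 1 u * B.indicator 1 (α * u - x) * φw (u - x) := by
    intro x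
    have hset : (Prod.mk x ⁻¹' (L ⁻¹' A ×ˢ B))
        = {y : ℝ | x + y ∈ A ∧ (α - 1) * x + α * y ∈ B} := by
      ext y; simp [hLdef, Set.mem_prod]
    have hsetm : MeasurableSet {y : ℝ | x + y ∈ A ∧ (α - 1) * x + α * y ∈ B} := by
      apply MeasurableSet.inter
      · exact measurable_const_add x hA
      · exact (by fun_prop : Measurable fun y : ℝ => (α - 1) * x + α * y) hB
    rw [hset, gaussianReal_of_var_ne_zero 0 hw, withDensity_apply _ hsetm,
      ← lintegral_indicator hsetm]
    have hpt : ∀ y : ℝ, Set.indicator {y : ℝ | x + y ∈ A ∧ (α - 1) * x + α * y ∈ B} φw y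
        = (fun u => A.indicator 1 u * B.indicator 1 (α * u - x) * φw (u - x)) (y + x) := by
      intro y
      have e1 : α * (y + x) - x = (α - 1) * x + α * y := by ring
      have e2 : (y + x) - x = y := by ring
      simp only [e1, e2]
      by_cases h1 : x + y ∈ A
      · have h1' : y + x ∈ A := by rwa [add_comm]
        by_cases h2 : (α - 1) * x + α * y ∈ B
        · simp [Set.indicator_of_mem, h1, h1', h2, Set.mem_setOf_eq]
        · simp [Set.indicator_of_mem, Set.indicator_of_notMem, h1', h2, Set.mem_setOf_eq]
      · have h1' : y + x ∉ A := by rwa [add_comm]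
        simp [Set.indicator_of_notMem, h1, h1', Set.mem_setOf_eq]
    calc ∫⁻ y, Set.indicator {y : ℝ | x + y ∈ A ∧ (α - 1) * x + α * y ∈ B} φw y
        = ∫⁻ y, (fun u => A.indicator 1 u * B.indicator 1 (α * u - x) * φw (u - x)) (y + x) := by
          exact lintegral_congr hpt
      _ = ∫⁻ u, A.indicator 1 u * B.indicator 1 (α * u - x) * φw (u - x) :=
          lintegral_add_right_eq_self (μ := volume) (fun u => A.indicator 1 u * B.indicator 1 (α * u - x) * φw (u - x)) x
  simp_rw [slice]
  -- measurability of the joint integrand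
  have hjoint : Measurable (fun q : ℝ × ℝ =>
      A.indicator 1 q.2 * B.indicator 1 (α * q.2 - q.1) * φw (q.2 - q.1)) := by
    apply Measurable.mul
    apply Measurable.mul
    · exact (measurable_const.indicator hA).comp measurable_snd
    · exact (measurable_const.indicator hB).comp (by fun_prop)
    · exact hφw.comp (by fun_prop)
  have hI : Measurable (fun x => ∫⁻ u, A.indicator 1 u * B.indicator 1 (α * u - x) * φw (u - x)) :=
    Measurable.lintegral_prod_right' hjoint
  rw [gaussianReal_of_var_ne_zero 0 hv,
    lintegral_withDensity_eq_lintegral_mul volume hφv hI]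
  have step1 : ∀ x : ℝ, (φv * fun x => ∫⁻ u, A.indicator 1 u * B.indicator 1 (α * u - x) * φw (u - x)) x
      = ∫⁻ u, φv x * (A.indicator 1 u * B.indicator 1 (α * u - x) * φw (u - x)) := by
    intro x
    simp only [Pi.mul_apply]
    rw [← lintegral_const_mul' _ _ (hφtop v x)]
  simp_rw [step1]
  rw [lintegral_lintegral_swap (((hφv.comp measurable_fst).mul hjoint).aemeasurable)]
  -- pointwise Gaussian factorization
  have hfac : ∀ u x : ℝ, φv x * (A.indicator 1 u * B.indicator 1 (α * u - x) * φw (u - x))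
      = (A.indicator 1 u * φs u) * (B.indicator 1 (α * u - x) * φq (α * u - x)) := by
    intro u x
    have := stmt17_gaussPDF_factor v w hv hw u x
    rw [← hα] at this
    calc φv x * (A.indicator 1 u * B.indicator 1 (α * u - x) * φw (u - x))
        = A.indicator 1 u * B.indicator 1 (α * u - x) * (φv x * φw (u - x)) := by ring
      _ = A.indicator 1 u * B.indicator 1 (α * u - x) * (φs u * φq (α * u - x)) := by
          rw [show φv x * φw (u - x) = φs u * φq (α * u - x) from this]
      _ = _ := by ring
  simp_rw [hfac]
  -- the inner integral over x
  set C : ℝ≥0∞ := ∫⁻ t, B.indicator 1 t * φq t with hCdef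
  have hCmeas : Measurable (fun t => B.indicator 1 t * φq t) :=
    (measurable_const.indicator hB).mul hφq
  have hC : C = gaussianReal 0 (v * w / (v + w)) B := by
    rw [gaussianReal_of_var_ne_zero 0 hvw', withDensity_apply _ hB, ← lintegral_indicator hB]
    refine lintegral_congr fun t => ?_
    by_cases ht : t ∈ B <;> simp [ht, φq]
  have hCtop : C ≠ ∞ := by rw [hC]; exact measure_ne_top _ _
  have hinner : ∀ u : ℝ,
      (∫⁻ x, (A.indicator 1 u * φs u) * (B.indicator 1 (α * u - x) * φq (α * u - x)))
      = (A.indicator 1 u * φs u) * C := by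
    intro u
    have hne : A.indicator 1 u * φs u ≠ ∞ := by
      apply ENNReal.mul_ne_top _ (hφtop _ _)
      by_cases hu : u ∈ A <;> simp [hu]
    rw [lintegral_const_mul' _ _ hne]
    congr 1
    have e3 : ∀ x : ℝ, α * u - x = -(x + -(α * u)) := fun x => by ring
    simp_rw [e3]
    rw [lintegral_add_right_eq_self (μ := volume)
      (fun x => B.indicator 1 (-x) * φq (-x)) (-(α * u))]
    have hmp : MeasurePreserving (fun x : ℝ => -x) volume volume :=
      ⟨measurable_neg, Measure.map_neg_eq_self _⟩
    exact hmp.lintegral_comp hCmeas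
  simp_rw [hinner]
  rw [lintegral_mul_const' C _ hCtop, hC]
  congr 1
  rw [gaussianReal_of_var_ne_zero 0 hvw, withDensity_apply _ hA, ← lintegral_indicator hA]
  refine lintegral_congr fun t => ?_
  by_cases ht : t ∈ A <;> simp [ht, φs]

/-- Kernel case of the finite-length no-trade-off result: with i.i.d.
covariates `Y_i` of density `p` supported on a compact interval, mutually independent
Gaussian noises `N_i ~ N(0,σ²)`, `Φ_i ~ N(0,σ_Φ²)`, `α = σ²/(σ² + σ_Φ²)`, responses
`V_i = f(Y_i) + N_i + Φ_i`, Nadaraya–Watson estimator `f̂`, generalization error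
`G = σ² + ∫(f̂(y) − f(y))²p(y)dy` and first-sample distortion
`D₁ = ((α−1)N₁ + αΦ₁)²`, provided the moments exist, `Cov(G, D₁) = 0`. -/
theorem stmt17
    {Ω : Type*} [MeasurableSpace Ω] {μ : Measure Ω} [IsProbabilityMeasure μ]
    (n : ℕ) (hn : 0 < n)
    (a b : ℝ) (hab : a < b)
    (p : ℝ → ℝ) (hpnn : ∀ t, 0 ≤ p t) (hpmeas : Measurable p) (hp1 : ∫ t, p t = 1)
    (hpsupp : ∀ t ∉ Set.Icc a b, p t = 0)
    (v vΦ : ℝ≥0) (hv : 0 < v) (hvΦ : 0 < vΦ)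
    (Y N Φ : Fin n → Ω → ℝ)
    (hYmeas : ∀ i, Measurable (Y i))
    (hNmeas : ∀ i, Measurable (N i)) (hΦmeas : ∀ i, Measurable (Φ i))
    (hYlaw : ∀ i, μ.map (Y i) = volume.withDensity (fun t => ENNReal.ofReal (p t)))
    (hNlaw : ∀ i, μ.map (N i) = gaussianReal 0 v)
    (hΦlaw : ∀ i, μ.map (Φ i) = gaussianReal 0 vΦ)
    (hindep : iIndepFun (Sum.elim Y (Sum.elim N Φ)) μ)
    (α : ℝ) (hα : α = (v : ℝ) / ((v : ℝ) + (vΦ : ℝ)))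
    (f : ℝ → ℝ) (hfmeas : Measurable f) (Mf : ℝ) (hfbd : ∀ x, |f x| ≤ Mf)
    (K : ℝ → ℝ) (hKpos : ∀ u, 0 < K u) (hKmeas : Measurable K)
    (h : ℝ) (hh : 0 < h)
    (fhat : Ω → ℝ → ℝ)
    (hfhat : ∀ ω y, fhat ω y =
      (∑ i, K ((y - Y i ω) / h) * (f (Y i ω) + N i ω + Φ i ω))
        / (∑ i, K ((y - Y i ω) / h)))
    (G : Ω → ℝ) (hG : G = fun ω => (v : ℝ) + ∫ y, (fhat ω y - f y) ^ 2 * p y)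
    (i0 : Fin n) (hi0 : i0 = ⟨0, hn⟩)
    (D1 : Ω → ℝ) (hD1 : D1 = fun ω => ((α - 1) * N i0 ω + α * Φ i0 ω) ^ 2)
    (hGint : Integrable G μ)
    (hGD1int : Integrable (fun ω => G ω * D1 ω) μ) :
    ∫ ω, G ω * D1 ω ∂μ = (∫ ω, G ω ∂μ) * ∫ ω, D1 ω ∂μ := by
  classical
  set ι := (Fin n ⊕ (Fin n ⊕ Fin n)) with hι
  set g : ι → Ω → ℝ := Sum.elim Y (Sum.elim N Φ) with hg'
  have hgmeas : ∀ i, Measurable (g i) := by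
    rintro (i | i | i)
    · exact hYmeas i
    · exact hNmeas i
    · exact hΦmeas i
  set T : Finset ι := {Sum.inr (Sum.inl i0), Sum.inr (Sum.inr i0)} with hT
  have mem1 : (Sum.inr (Sum.inl i0) : ι) ∈ T := by simp [hT]
  have mem2 : (Sum.inr (Sum.inr i0) : ι) ∈ T := by simp [hT]
  have memY : ∀ i : Fin n, (Sum.inl i : ι) ∈ Tᶜ := by intro i; simp [hT]
  have memN : ∀ i : Fin n, i ≠ i0 → (Sum.inr (Sum.inl i) : ι) ∈ Tᶜ := by
    intro i hi; simp [hT, hi]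
  have memΦ : ∀ i : Fin n, i ≠ i0 → (Sum.inr (Sum.inr i) : ι) ∈ Tᶜ := by
    intro i hi; simp [hT, hi]
  set A : Ω → ((Tᶜ : Finset ι) → ℝ) := fun ω i => g i ω with hA
  set B : Ω → (↥T → ℝ) := fun ω i => g i ω with hB
  have hAmeas : Measurable A := measurable_pi_lambda _ fun i => hgmeas i
  have hBmeas : Measurable B := measurable_pi_lambda _ fun i => hgmeas i
  have hAB : IndepFun A B μ :=
    hindep.indepFun_finset Tᶜ T disjoint_compl_left hgmeas
  -- the two linear combinations of the i0 noises
  set Sf : Ω → ℝ := fun ω => N i0 ω + Φ i0 ω with hSf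
  set Wf : Ω → ℝ := fun ω => (α - 1) * N i0 ω + α * Φ i0 ω with hWf
  have hSfmeas : Measurable Sf := ((hNmeas i0).add (hΦmeas i0))
  have hWfmeas : Measurable Wf := by
    apply Measurable.add <;> exact (measurable_const.mul (by fun_prop))
  set ψB : (↥T → ℝ) → ℝ × ℝ := fun q =>
    (q ⟨_, mem1⟩ + q ⟨_, mem2⟩, (α - 1) * q ⟨_, mem1⟩ + α * q ⟨_, mem2⟩) with hψB
  have hψBmeas : Measurable ψB := by
    apply Measurable.prod <;> simp only [hψB] <;> fun_prop
  set SW : Ω → ℝ × ℝ := fun ω => (Sf ω, Wf ω) with hSW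
  have hSWmeas : Measurable SW := hSfmeas.prodMk hWfmeas
  have hSW_eq : SW = ψB ∘ B := rfl
  have hA_SW : IndepFun A SW μ := by
    have := hAB.comp measurable_id hψBmeas
    rwa [Function.id_comp, ← hSW_eq] at this
  -- laws
  set w : ℝ≥0 := v * vΦ / (v + vΦ) with hw
  have hNΦindep : IndepFun (N i0) (Φ i0) μ := by
    have := hindep.indepFun
      (i := (Sum.inr (Sum.inl i0) : ι)) (j := (Sum.inr (Sum.inr i0) : ι)) (by simp)
    exact this
  have hmapNΦ : μ.map (fun ω => (N i0 ω, Φ i0 ω)) = (gaussianReal 0 v).prod (gaussianReal 0 vΦ) := by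
    rw [← hNlaw i0, ← hΦlaw i0]
    exact (indepFun_iff_map_prod_eq_prod_map_map (hNmeas i0).aemeasurable
      (hΦmeas i0).aemeasurable).mp hNΦindep
  set L : ℝ × ℝ → ℝ × ℝ := fun z => (z.1 + z.2, (α - 1) * z.1 + α * z.2) with hL
  have hLmeas : Measurable L := by fun_prop
  have hmapSW : μ.map SW = (gaussianReal 0 (v + vΦ)).prod (gaussianReal 0 w) := by
    have : SW = L ∘ fun ω => (N i0 ω, Φ i0 ω) := rfl
    rw [this, ← Measure.map_map hLmeas ((hNmeas i0).prodMk (hΦmeas i0)), hmapNΦ]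
    exact stmt17_core v vΦ hv.ne' hvΦ.ne' α hα
  have hmapS : μ.map Sf = gaussianReal 0 (v + vΦ) := by
    have : Sf = Prod.fst ∘ SW := rfl
    rw [this, ← Measure.map_map measurable_fst hSWmeas, hmapSW, Measure.map_fst_prod,
      measure_univ, one_smul]
  have hmapW : μ.map Wf = gaussianReal 0 w := by
    have : Wf = Prod.snd ∘ SW := rfl
    rw [this, ← Measure.map_map measurable_snd hSWmeas, hmapSW, Measure.map_snd_prod,
      measure_univ, one_smul]
  have hS_W : IndepFun Sf Wf μ := by
    rw [indepFun_iff_map_prod_eq_prod_map_map hSfmeas.aemeasurable hWfmeas.aemeasurable,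
      hmapS, hmapW]
    exact hmapSW
  have hA_S : IndepFun A Sf μ := by
    have := hA_SW.comp measurable_id (measurable_fst (α := ℝ) (β := ℝ))
    rwa [Function.id_comp] at this
  -- joint independence of (A, Sf) and Wf
  have hAS_W : IndepFun (fun ω => (A ω, Sf ω)) Wf μ := by
    rw [indepFun_iff_map_prod_eq_prod_map_map
      (((hAmeas.prodMk hSfmeas)).aemeasurable) hWfmeas.aemeasurable]
    have e : (fun ω => ((A ω, Sf ω), Wf ω))
        = (MeasurableEquiv.prodAssoc
            (α := (Tᶜ : Finset ι) → ℝ) (β := ℝ) (γ := ℝ)).symm ∘ fun ω => (A ω, SW ω) := rfl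
    rw [e, ← Measure.map_map (MeasurableEquiv.prodAssoc.symm.measurable)
      (hAmeas.prodMk hSWmeas)]
    have h1 : μ.map (fun ω => (A ω, SW ω)) = (μ.map A).prod (μ.map SW) :=
      (indepFun_iff_map_prod_eq_prod_map_map hAmeas.aemeasurable hSWmeas.aemeasurable).mp hA_SW
    have h2 : μ.map SW = (μ.map Sf).prod (μ.map Wf) :=
      (indepFun_iff_map_prod_eq_prod_map_map hSfmeas.aemeasurable hWfmeas.aemeasurable).mp hS_W
    have h3 : μ.map (fun ω => (A ω, Sf ω)) = (μ.map A).prod (μ.map Sf) :=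
      (indepFun_iff_map_prod_eq_prod_map_map hAmeas.aemeasurable hSfmeas.aemeasurable).mp hA_S
    rw [h1, h2, h3, ← Measure.prodAssoc_prod, MeasurableEquiv.map_symm_map]
  -- express G as a measurable function of (A, Sf)
  set Ψ : (((Tᶜ : Finset ι) → ℝ) × ℝ) → ℝ := fun q =>
    (v : ℝ) + ∫ t, ((∑ i, K ((t - q.1 ⟨Sum.inl i, memY i⟩) / h) *
        (f (q.1 ⟨Sum.inl i, memY i⟩) +
          (if hc : i = i0 then q.2
            else q.1 ⟨Sum.inr (Sum.inl i), memN i hc⟩ + q.1 ⟨Sum.inr (Sum.inr i), memΦ i hc⟩)))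
      / (∑ i, K ((t - q.1 ⟨Sum.inl i, memY i⟩) / h)) - f t) ^ 2 * p t with hΨ
  have hΨmeas : Measurable Ψ := by
    apply Measurable.const_add
    have hFmeas : StronglyMeasurable (fun z : (((Tᶜ : Finset ι) → ℝ) × ℝ) × ℝ =>
        ((∑ i, K ((z.2 - z.1.1 ⟨Sum.inl i, memY i⟩) / h) *
          (f (z.1.1 ⟨Sum.inl i, memY i⟩) +
            (if hc : i = i0 then z.1.2
              else z.1.1 ⟨Sum.inr (Sum.inl i), memN i hc⟩
                + z.1.1 ⟨Sum.inr (Sum.inr i), memΦ i hc⟩)))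
        / (∑ i, K ((z.2 - z.1.1 ⟨Sum.inl i, memY i⟩) / h)) - f z.2) ^ 2 * p z.2) := by
      apply Measurable.stronglyMeasurable
      apply Measurable.mul _ (hpmeas.comp measurable_snd)
      apply Measurable.pow _ measurable_const
      apply Measurable.sub _ (hfmeas.comp measurable_snd)
      apply Measurable.div
      · apply Finset.measurable_sum
        intro i _
        apply Measurable.mul
        · exact hKmeas.comp (by fun_prop)
        · apply Measurable.add
          · exact hfmeas.comp (by fun_prop)
          · by_cases hc : i = i0 <;> simp only [hc, dif_pos, dif_neg, not_false_iff] <;> fun_prop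
      · apply Finset.measurable_sum
        intro i _
        exact hKmeas.comp (by fun_prop)
    exact hFmeas.integral_prod_right'.measurable
  have hGeq : G = Ψ ∘ fun ω => (A ω, Sf ω) := by
    funext ω
    simp only [hG, Function.comp_apply, hΨ]
    congr 1
    congr 1
    funext t
    rw [hfhat]
    have hnum : (∑ i, K ((t - Y i ω) / h) * (f (Y i ω) + N i ω + Φ i ω))
        = ∑ i, K ((t - A ω ⟨Sum.inl i, memY i⟩) / h) *
            (f (A ω ⟨Sum.inl i, memY i⟩) +
              (if hc : i = i0 then Sf ω
                else A ω ⟨Sum.inr (Sum.inl i), memN i hc⟩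
                  + A ω ⟨Sum.inr (Sum.inr i), memΦ i hc⟩)) := by
      refine Finset.sum_congr rfl fun i _ => ?_
      by_cases hc : i = i0
      · subst hc
        simp only [dif_pos]
        show K ((t - Y i ω) / h) * (f (Y i ω) + N i ω + Φ i ω)
          = K ((t - Y i ω) / h) * (f (Y i ω) + (N i ω + Φ i ω))
        ring
      · simp only [dif_neg hc]
        show K ((t - Y i ω) / h) * (f (Y i ω) + N i ω + Φ i ω)
          = K ((t - Y i ω) / h) * (f (Y i ω) + (N i ω + Φ i ω))
        ring
    rw [hnum]
    rfl
  have hD1eq : D1 = (fun x : ℝ => x ^ 2) ∘ Wf := by rw [hD1]; rfl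
  have hGD1 : IndepFun G D1 μ := by
    rw [hGeq, hD1eq]
    exact hAS_W.comp hΨmeas (measurable_id.pow_const 2)
  -- conclude
  have hGnn : 0 ≤ G := by
    rw [hG]
    intro ω
    apply add_nonneg v.coe_nonneg
    exact integral_nonneg fun t => mul_nonneg (sq_nonneg _) (hpnn t)
  have hD1nn : 0 ≤ D1 := by rw [hD1]; intro ω; exact sq_nonneg _
  have hD1meas : Measurable D1 := by rw [hD1]; fun_prop
  have := hGD1.integral_fun_mul_eq_mul_integral hGint.1 hD1meas.aestronglyMeasurable
  simpa [Pi.mul_apply] using this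
end
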